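/- arXiv:1505.05055 — 2 statements merged into one kernel-verified Lean document; each statement's English description precedes it below -/
import Mathlib

section
/- Consider a root triangle uniformly refined to level L with an assigned root type τ ∈ {0,1}. If τ = 0, then every contiguous TM segment of level-L subtriangles that contains the last subtriangle in TM order is face-connected (a single face-connected component). If τ = 1, then every contiguous TM segment that contains the first subtriangle in TM order is face-connected. -/
/-- Points of the plane. -/
abbrev TMV : Type := Fin 2 → ℝ

/-- Midpoint of two points of the plane. -/
noncomputable def tmMid (a b : TMV) : TMV := (1 / 2 : ℝ) • (a + b)

/-- Bey's refinement: the four children of a triangle `[x 0, x 1, x 2]`. -/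
noncomputable def beyChild (x : Fin 3 → TMV) : Fin 4 → Fin 3 → TMV :=
  ![![x 0, tmMid (x 0) (x 1), tmMid (x 0) (x 2)],
    ![tmMid (x 0) (x 1), x 1, tmMid (x 1) (x 2)],
    ![tmMid (x 0) (x 2), tmMid (x 1) (x 2), x 2],
    ![tmMid (x 0) (x 1), tmMid (x 0) (x 2), tmMid (x 1) (x 2)]]

/-- The vertices of the subtriangle of the root `x` reached by the successive
child choices recorded in the list `p`. -/
noncomputable def tmVerts (x : Fin 3 → TMV) : List (Fin 4) → Fin 3 → TMV
  | [] => x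
  | i :: p => tmVerts (beyChild x i) p

/-- The type of the subtriangle reached by path `p` from a root of type `τ`:
children `T_0, T_1, T_2` inherit the parent's type, `T_3` has the opposite type. -/
def tmType (τ : Fin 2) : List (Fin 4) → Fin 2
  | [] => τ
  | i :: p => tmType (if i = 3 then 1 - τ else τ) p

/-- The position of Bey child `i` in the TM traversal order of the children of a
parent of type `b`: order `T_0, T_1, T_3, T_2` for type 0 and `T_0, T_3, T_1, T_2`
for type 1. -/
def tmChildRank (b : Fin 2) : Fin 4 → Fin 4 :=
  if b = 0 then ![0, 1, 3, 2] else ![0, 2, 3, 1]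

/-- The TM index of the level-`p.length` subtriangle given by path `p` from a root
of type `τ`, among all subtriangles of that level. -/
def tmIndex (τ : Fin 2) : List (Fin 4) → ℕ
  | [] => 0
  | i :: p => (tmChildRank τ i : ℕ) * 4 ^ p.length + tmIndex (if i = 3 then 1 - τ else τ) p

/-- The closed triangle spanned by the three vertices. -/
def triSet (x : Fin 3 → TMV) : Set TMV := convexHull ℝ {x 0, x 1, x 2}

/-- `e` is a complete edge of the triangle with vertices `x`. -/
def triIsEdge (x : Fin 3 → TMV) (e : Set TMV) : Prop :=
  ∃ i j : Fin 3, i ≠ j ∧ e = segment ℝ (x i) (x j)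

/-- Two triangles are face-neighbors if their intersection is a complete edge of both. -/
def triFaceNbr (x y : Fin 3 → TMV) : Prop :=
  ∃ e, triIsEdge x e ∧ triIsEdge y e ∧ triSet x ∩ triSet y = e

/-- A set `S` of subtriangle paths (with root vertices `x0`) is face-connected. -/
def triFaceConnected (x0 : Fin 3 → TMV) (S : Set (List (Fin 4))) : Prop :=
  ∀ p ∈ S, ∀ q ∈ S,
    Relation.ReflTransGen
      (fun a b => a ∈ S ∧ b ∈ S ∧ triFaceNbr (tmVerts x0 a) (tmVerts x0 b)) p q

/-- `S` has at most `n` face-connected components. -/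
def triCompBound (x0 : Fin 3 → TMV) (S : Set (List (Fin 4))) (n : ℕ) : Prop :=
  ∃ f : Fin n → Set (List (Fin 4)), S = ⋃ i, f i ∧ ∀ i, triFaceConnected x0 (f i)

/-- `S` is a contiguous segment of the TM curve through the uniform level-`L`
refinement of a root of type `τ`: a set of level-`L` paths forming an interval
in the TM order. -/
def tmSegment (τ : Fin 2) (L : ℕ) (S : Set (List (Fin 4))) : Prop :=
  (∀ p ∈ S, p.length = L) ∧
  ∀ p q r : List (Fin 4), p.length = L → q.length = L → r.length = L →
    p ∈ S → r ∈ S → tmIndex τ p ≤ tmIndex τ q → tmIndex τ q ≤ tmIndex τ r → q ∈ S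

lemma tmMid_comm (a b : TMV) : tmMid a b = tmMid b a := by simp [tmMid, add_comm]
lemma tmMid_eq_midpoint (a b : TMV) : tmMid a b = midpoint ℝ a b := by
  rw [midpoint_eq_smul_add, tmMid]; norm_num
def dig (a : Fin 3) : Fin 4 := a.castSucc
lemma beyChild_dig (x : Fin 3 → TMV) (a k : Fin 3) :
    beyChild x (dig a) k = if k = a then x a else tmMid (x a) (x k) := by
  fin_cases a <;> fin_cases k <;> simp [beyChild, dig] <;> first | rfl | exact tmMid_comm _ _
lemma phi_tmMid (φ : TMV →ᵃ[ℝ] ℝ) (p q : TMV) : φ (tmMid p q) = (φ p + φ q) / 2 := by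
  rw [tmMid_eq_midpoint, AffineMap.map_midpoint, midpoint_eq_smul_add]
  simp [invOf_eq_inv]; ring

def edgePath (a b : Fin 3) (s : List Bool) : List (Fin 4) :=
  s.map (fun t => if t then dig b else dig a)

@[simp] lemma edgePath_length (a b : Fin 3) (s : List Bool) :
    (edgePath a b s).length = s.length := by simp [edgePath]

noncomputable def esub (p q : TMV) : List Bool → TMV × TMV
  | [] => (p, q)
  | t :: s => if t then esub (tmMid p q) q s else esub p (tmMid p q) s

noncomputable def wsub (p q w : TMV) : List Bool → TMV
  | [] => w
  | t :: s => if t then wsub (tmMid p q) q (tmMid q w) s else wsub p (tmMid p q) (tmMid p w) s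

lemma tmVerts_edgePath (a b e : Fin 3) (hab : a ≠ b) (hea : e ≠ a) (heb : e ≠ b) :
    ∀ (s : List Bool) (x : Fin 3 → TMV),
      tmVerts x (edgePath a b s) a = (esub (x a) (x b) s).1 ∧
      tmVerts x (edgePath a b s) b = (esub (x a) (x b) s).2 ∧
      tmVerts x (edgePath a b s) e = wsub (x a) (x b) (x e) s
  | [], x => ⟨rfl, rfl, rfl⟩
  | t :: s, x => by
    have hba : ¬ (b = a) := fun h => hab h.symm
    cases t
    · have h := tmVerts_edgePath a b e hab hea heb s (beyChild x (dig a))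
      have e1 : beyChild x (dig a) a = x a := by rw [beyChild_dig]; simp
      have e2 : beyChild x (dig a) b = tmMid (x a) (x b) := by rw [beyChild_dig]; simp [hba]
      have e3 : beyChild x (dig a) e = tmMid (x a) (x e) := by rw [beyChild_dig]; simp [hea]
      rw [e1, e2, e3] at h
      simpa [edgePath, tmVerts, esub, wsub] using h
    · have h := tmVerts_edgePath a b e hab hea heb s (beyChild x (dig b))
      have e1 : beyChild x (dig b) a = tmMid (x a) (x b) := by
        rw [beyChild_dig]; simp [hab]; exact tmMid_comm _ _
      have e2 : beyChild x (dig b) b = x b := by rw [beyChild_dig]; simp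
      have e3 : beyChild x (dig b) e = tmMid (x b) (x e) := by rw [beyChild_dig]; simp [heb]
      rw [e1, e2, e3] at h
      simpa [edgePath, tmVerts, esub, wsub] using h

lemma esub_phi (φ : TMV →ᵃ[ℝ] ℝ) :
    ∀ (s : List Bool) (p q : TMV), φ p = 0 → φ q = 0 →
      φ (esub p q s).1 = 0 ∧ φ (esub p q s).2 = 0
  | [], p, q, hp, hq => ⟨hp, hq⟩
  | t :: s, p, q, hp, hq => by
    have hm : φ (tmMid p q) = 0 := by rw [phi_tmMid, hp, hq]; ring
    cases t
    · simpa [esub] using esub_phi φ s p (tmMid p q) hp hm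
    · simpa [esub] using esub_phi φ s (tmMid p q) q hm hq

lemma wsub_phi_pos (φ : TMV →ᵃ[ℝ] ℝ) :
    ∀ (s : List Bool) (p q w : TMV), φ p = 0 → φ q = 0 → 0 < φ w →
      0 < φ (wsub p q w s)
  | [], p, q, w, _, _, hw => hw
  | t :: s, p, q, w, hp, hq, hw => by
    have hm : φ (tmMid p q) = 0 := by rw [phi_tmMid, hp, hq]; ring
    cases t
    · have hw' : 0 < φ (tmMid p w) := by rw [phi_tmMid, hp]; linarith
      simpa [wsub] using wsub_phi_pos φ s p (tmMid p q) (tmMid p w) hp hm hw'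
    · have hw' : 0 < φ (tmMid q w) := by rw [phi_tmMid, hq]; linarith
      simpa [wsub] using wsub_phi_pos φ s (tmMid p q) q (tmMid q w) hm hq hw'

lemma wsub_phi_neg (φ : TMV →ᵃ[ℝ] ℝ) (s : List Bool) (p q w : TMV)
    (hp : φ p = 0) (hq : φ q = 0) (hw : φ w < 0) : φ (wsub p q w s) < 0 := by
  have := wsub_phi_pos (-φ) s p q w (by simp [hp]) (by simp [hq]) (by simp; linarith)
  simp at this; linarith

lemma mem_triSet_self (x : Fin 3 → TMV) (k : Fin 3) : x k ∈ triSet x := by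
  apply subset_convexHull
  fin_cases k <;> simp

lemma tmMid_mem_segment (p q : TMV) : tmMid p q ∈ segment ℝ p q := by
  refine ⟨1/2, 1/2, by norm_num, by norm_num, by norm_num, ?_⟩
  rw [tmMid, smul_add]

lemma triSet_beyChild_subset (x : Fin 3 → TMV) (i : Fin 4) :
    triSet (beyChild x i) ⊆ triSet x := by
  apply convexHull_min _ (convex_convexHull ℝ _)
  have hmid : ∀ a b : Fin 3, tmMid (x a) (x b) ∈ triSet x := fun a b =>
    (convex_convexHull ℝ _).segment_subset (mem_triSet_self x a) (mem_triSet_self x b)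
      (tmMid_mem_segment _ _)
  intro z hz
  fin_cases i <;>
    simp only [beyChild, Matrix.cons_val_zero, Matrix.cons_val_one, Matrix.head_cons,
      Matrix.cons_val_two, Matrix.tail_cons, Matrix.cons_val_three, Fin.isValue] at hz <;>
    rcases hz with rfl | rfl | rfl <;>
    first | exact mem_triSet_self x _ | exact hmid _ _

lemma triSet_tmVerts_subset (x : Fin 3 → TMV) :
    ∀ p : List (Fin 4), triSet (tmVerts x p) ⊆ triSet x
  | [] => subset_rfl
  | i :: p => (triSet_tmVerts_subset (beyChild x i) p).trans (triSet_beyChild_subset x i)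

lemma triFaceNbr_symm {x y : Fin 3 → TMV} (h : triFaceNbr x y) : triFaceNbr y x := by
  obtain ⟨e, h1, h2, h3⟩ := h
  exact ⟨e, h2, h1, by rw [Set.inter_comm]; exact h3⟩

lemma crossGen (X Y : Fin 3 → TMV) (a b eX c d eY : Fin 3)
    (hab : a ≠ b) (heXa : eX ≠ a) (heXb : eX ≠ b)
    (hcd : c ≠ d) (heYc : eY ≠ c) (heYd : eY ≠ d)
    (hXall : ∀ k : Fin 3, k = a ∨ k = b ∨ k = eX)
    (hYall : ∀ k : Fin 3, k = c ∨ k = d ∨ k = eY)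
    (hac : X a = Y c) (hbd : X b = Y d)
    (φ : TMV →ᵃ[ℝ] ℝ) (h0a : φ (X a) = 0) (h0b : φ (X b) = 0)
    (hpos : 0 < φ (X eX)) (hneg : φ (Y eY) < 0) (s : List Bool) :
    triFaceNbr (tmVerts X (edgePath a b s)) (tmVerts Y (edgePath c d s)) := by
  set P := tmVerts X (edgePath a b s) with hP
  set Q := tmVerts Y (edgePath c d s) with hQ
  obtain ⟨hPa, hPb, hPe⟩ := tmVerts_edgePath a b eX hab heXa heXb s X
  obtain ⟨hQc, hQd, hQe⟩ := tmVerts_edgePath c d eY hcd heYc heYd s Y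
  rw [← hac, ← hbd] at hQc hQd hQe
  rw [← hP] at hPa hPb hPe
  rw [← hQ] at hQc hQd hQe
  set u := (esub (X a) (X b) s).1 with hu
  set v := (esub (X a) (X b) s).2 with hv
  -- φ values
  obtain ⟨hφu, hφv⟩ := esub_phi φ s (X a) (X b) h0a h0b
  have hφP : 0 < φ (P eX) := by rw [hPe]; exact wsub_phi_pos φ s _ _ _ h0a h0b hpos
  have hφQ : φ (Q eY) < 0 := by rw [hQe]; exact wsub_phi_neg φ s _ _ _ h0a h0b hneg
  -- vertex sets
  have hPset : ({P 0, P 1, P 2} : Set TMV) = {u, v, P eX} := by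
    have h1 : ∀ k : Fin 3, P k ∈ ({u, v, P eX} : Set TMV) := by
      intro k
      rcases hXall k with rfl | rfl | rfl
      · rw [hPa]; simp
      · rw [hPb]; simp
      · simp
    have h2 : ∀ k : Fin 3, P k ∈ ({P 0, P 1, P 2} : Set TMV) := by
      intro k; fin_cases k <;> simp
    apply Set.eq_of_subset_of_subset
    · intro z hz; rcases hz with rfl | rfl | rfl <;> exact h1 _
    · intro z hz
      rcases hz with rfl | rfl | rfl
      · rw [← hPa]; exact h2 a
      · rw [← hPb]; exact h2 b
      · exact h2 eX
  have hQset : ({Q 0, Q 1, Q 2} : Set TMV) = {u, v, Q eY} := by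
    have h1 : ∀ k : Fin 3, Q k ∈ ({u, v, Q eY} : Set TMV) := by
      intro k
      rcases hYall k with rfl | rfl | rfl
      · rw [hQc]; simp
      · rw [hQd]; simp
      · simp
    have h2 : ∀ k : Fin 3, Q k ∈ ({Q 0, Q 1, Q 2} : Set TMV) := by
      intro k; fin_cases k <;> simp
    apply Set.eq_of_subset_of_subset
    · intro z hz; rcases hz with rfl | rfl | rfl <;> exact h1 _
    · intro z hz
      rcases hz with rfl | rfl | rfl
      · rw [← hQc]; exact h2 c
      · rw [← hQd]; exact h2 d
      · exact h2 eY
  -- half spaces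
  have hXhalf : triSet X ⊆ φ ⁻¹' (Set.Ici 0) := by
    apply convexHull_min _ ((convex_Ici (0:ℝ)).affine_preimage φ)
    intro z hz
    have : ∀ k : Fin 3, φ (X k) ∈ Set.Ici (0:ℝ) := by
      intro k
      rcases hXall k with rfl | rfl | rfl
      · simp [h0a]
      · simp [h0b]
      · exact le_of_lt hpos
    rcases hz with rfl | rfl | rfl
    · exact this 0
    · exact this 1
    · exact this 2
  have hYhalf : triSet Y ⊆ φ ⁻¹' (Set.Iic 0) := by
    apply convexHull_min _ ((convex_Iic (0:ℝ)).affine_preimage φ)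
    intro z hz
    have : ∀ k : Fin 3, φ (Y k) ∈ Set.Iic (0:ℝ) := by
      intro k
      rcases hYall k with rfl | rfl | rfl
      · rw [← hac]; simp [h0a]
      · rw [← hbd]; simp [h0b]
      · exact le_of_lt hneg
    rcases hz with rfl | rfl | rfl
    · exact this 0
    · exact this 1
    · exact this 2
  -- segment in zero set lemma
  have segzero : ∀ z ∈ segment ℝ u v, φ z = 0 := by
    intro z hz
    obtain ⟨α, β, hα, hβ, hαβ, rfl⟩ := hz
    rw [Convex.combo_affine_apply hαβ, hφu, hφv]; simp
  -- the intersection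
  have hinter : triSet P ∩ triSet Q = segment ℝ u v := by
    apply Set.eq_of_subset_of_subset
    · rintro z ⟨hzP, hzQ⟩
      have hz0 : φ z = 0 := by
        have h1 : 0 ≤ φ z := hXhalf ((triSet_tmVerts_subset X _ ) hzP)
        have h2 : φ z ≤ 0 := hYhalf ((triSet_tmVerts_subset Y _ ) hzQ)
        linarith
      have hzP' : z ∈ convexHull ℝ (insert (P eX) {u, v} : Set TMV) := by
        have : ({u, v, P eX} : Set TMV) = insert (P eX) {u, v} := by
          ext w; simp; tauto
        rw [triSet, hPset, this] at hzP
        exact hzP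
      rw [convexHull_insert ⟨u, by simp⟩, mem_convexJoin] at hzP'
      obtain ⟨w', hw', z', hz', hzseg⟩ := hzP'
      rw [Set.mem_singleton_iff] at hw'
      subst hw'
      rw [convexHull_pair] at hz'
      obtain ⟨α, β, hα, hβ, hαβ, rfl⟩ := hzseg
      have hφz' : φ z' = 0 := segzero z' hz'
      rw [Convex.combo_affine_apply hαβ, hφz'] at hz0
      have hα0 : α = 0 := by
        simp only [smul_eq_mul, mul_zero, add_zero, mul_eq_zero] at hz0
        rcases hz0 with h | h
        · exact h
        · exact absurd h (ne_of_gt hφP)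
      subst hα0
      have hβ1 : β = 1 := by linarith
      subst hβ1
      simpa using hz'
    · intro z hz
      have huP : u ∈ triSet P := by rw [← hPa]; exact mem_triSet_self P a
      have hvP : v ∈ triSet P := by rw [← hPb]; exact mem_triSet_self P b
      have huQ : u ∈ triSet Q := by rw [← hQc]; exact mem_triSet_self Q c
      have hvQ : v ∈ triSet Q := by rw [← hQd]; exact mem_triSet_self Q d
      exact ⟨(convex_convexHull ℝ _).segment_subset huP hvP hz,
             (convex_convexHull ℝ _).segment_subset huQ hvQ hz⟩
  exact ⟨segment ℝ u v, ⟨a, b, hab, by rw [hPa, hPb]⟩, ⟨c, d, hcd, by rw [hQc, hQd]⟩, hinter⟩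

def HB (x : Fin 3 → TMV) : Prop :=
  ∃ lam : Fin 3 → (TMV →ᵃ[ℝ] ℝ), ∀ i j, lam i (x j) = if i = j then 1 else 0

lemma HB_of_affineIndependent {x : Fin 3 → TMV} (hx : AffineIndependent ℝ x) : HB x := by
  have htop : affineSpan ℝ (Set.range x) = ⊤ := by
    rw [hx.affineSpan_eq_top_iff_card_eq_finrank_add_one]
    simp [Module.finrank_fintype_fun_eq_card]
  let B : AffineBasis (Fin 3) ℝ TMV := ⟨x, hx, htop⟩
  exact ⟨B.coord, fun i j => B.coord_apply i j⟩

lemma HB_beyChild {x : Fin 3 → TMV} (hx : HB x) (i : Fin 4) : HB (beyChild x i) := by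
  obtain ⟨lam, hlam⟩ := hx
  fin_cases i
  · refine ⟨![lam 0 - lam 1 - lam 2, (2:ℝ) • lam 1, (2:ℝ) • lam 2], ?_⟩
    intro i j
    fin_cases i <;> fin_cases j <;>
      simp [beyChild, phi_tmMid, hlam] <;> norm_num [phi_tmMid, hlam]
  · refine ⟨![(2:ℝ) • lam 0, lam 1 - lam 0 - lam 2, (2:ℝ) • lam 2], ?_⟩
    intro i j
    fin_cases i <;> fin_cases j <;>
      simp [beyChild, phi_tmMid, hlam] <;> norm_num [phi_tmMid, hlam]
  · refine ⟨![(2:ℝ) • lam 0, (2:ℝ) • lam 1, lam 2 - lam 0 - lam 1], ?_⟩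
    intro i j
    fin_cases i <;> fin_cases j <;>
      simp [beyChild, phi_tmMid, hlam] <;> norm_num [phi_tmMid, hlam]
  · refine ⟨![lam 0 + lam 1 - lam 2, lam 0 - lam 1 + lam 2, lam 1 + lam 2 - lam 0], ?_⟩
    intro i j
    fin_cases i <;> fin_cases j <;>
      simp [beyChild, phi_tmMid, hlam] <;> norm_num [phi_tmMid, hlam]

def Nbr (x : Fin 3 → TMV) (p q : List (Fin 4)) : Prop :=
  triFaceNbr (tmVerts x p) (tmVerts x q)

lemma pairA {x : Fin 3 → TMV} (hx : HB x) (s : List Bool) :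
    Nbr x ((0:Fin 4) :: edgePath 1 2 s) ((3:Fin 4) :: edgePath 0 1 s) := by
  obtain ⟨lam, hlam⟩ := hx
  show triFaceNbr (tmVerts (beyChild x 0) (edgePath 1 2 s)) (tmVerts (beyChild x 3) (edgePath 0 1 s))
  refine crossGen (beyChild x 0) (beyChild x 3) 1 2 0 0 1 2
    (by decide) (by decide) (by decide) (by decide) (by decide) (by decide)
    (by decide) (by decide) (by simp [beyChild]) (by simp [beyChild])
    (lam 0 - lam 1 - lam 2) ?_ ?_ ?_ ?_ s
  · norm_num [beyChild, phi_tmMid, hlam, Fin.ext_iff]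
  · norm_num [beyChild, phi_tmMid, hlam, Fin.ext_iff, Matrix.cons_val_two, Matrix.cons_val_three, Matrix.tail_cons, Matrix.head_cons]
  · norm_num [beyChild, phi_tmMid, hlam, Fin.ext_iff]
  · norm_num [beyChild, phi_tmMid, hlam, Fin.ext_iff, Matrix.cons_val_two, Matrix.cons_val_three, Matrix.tail_cons, Matrix.head_cons]

lemma pairB {x : Fin 3 → TMV} (hx : HB x) (s : List Bool) :
    Nbr x ((1:Fin 4) :: edgePath 0 2 s) ((3:Fin 4) :: edgePath 0 2 s) := by
  obtain ⟨lam, hlam⟩ := hx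
  show triFaceNbr (tmVerts (beyChild x 1) (edgePath 0 2 s)) (tmVerts (beyChild x 3) (edgePath 0 2 s))
  refine crossGen (beyChild x 1) (beyChild x 3) 0 2 1 0 2 1
    (by decide) (by decide) (by decide) (by decide) (by decide) (by decide)
    (by decide) (by decide) (by simp [beyChild]) (by simp [beyChild])
    (lam 1 - lam 0 - lam 2) ?_ ?_ ?_ ?_ s
  · norm_num [beyChild, phi_tmMid, hlam, Fin.ext_iff]
  · norm_num [beyChild, phi_tmMid, hlam, Fin.ext_iff, Matrix.cons_val_two, Matrix.cons_val_three, Matrix.tail_cons, Matrix.head_cons]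
  · norm_num [beyChild, phi_tmMid, hlam, Fin.ext_iff]
  · norm_num [beyChild, phi_tmMid, hlam, Fin.ext_iff, Matrix.cons_val_two, Matrix.cons_val_three, Matrix.tail_cons, Matrix.head_cons]

lemma pairC {x : Fin 3 → TMV} (hx : HB x) (s : List Bool) :
    Nbr x ((3:Fin 4) :: edgePath 1 2 s) ((2:Fin 4) :: edgePath 0 1 s) := by
  obtain ⟨lam, hlam⟩ := hx
  show triFaceNbr (tmVerts (beyChild x 3) (edgePath 1 2 s)) (tmVerts (beyChild x 2) (edgePath 0 1 s))
  refine crossGen (beyChild x 3) (beyChild x 2) 1 2 0 0 1 2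
    (by decide) (by decide) (by decide) (by decide) (by decide) (by decide)
    (by decide) (by decide) (by simp [beyChild]) (by simp [beyChild])
    (lam 0 + lam 1 - lam 2) ?_ ?_ ?_ ?_ s
  · norm_num [beyChild, phi_tmMid, hlam, Fin.ext_iff, Matrix.cons_val_two, Matrix.cons_val_three, Matrix.tail_cons, Matrix.head_cons]
  · norm_num [beyChild, phi_tmMid, hlam, Fin.ext_iff, Matrix.cons_val_two, Matrix.cons_val_three, Matrix.tail_cons, Matrix.head_cons]
  · norm_num [beyChild, phi_tmMid, hlam, Fin.ext_iff, Matrix.cons_val_two, Matrix.cons_val_three, Matrix.tail_cons, Matrix.head_cons]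
  · norm_num [beyChild, phi_tmMid, hlam, Fin.ext_iff, Matrix.cons_val_two, Matrix.cons_val_three, Matrix.tail_cons, Matrix.head_cons]

@[simp] lemma rnk00 : (tmChildRank 0 0 : ℕ) = 0 := rfl
@[simp] lemma rnk01 : (tmChildRank 0 1 : ℕ) = 1 := rfl
@[simp] lemma rnk02 : (tmChildRank 0 2 : ℕ) = 3 := rfl
@[simp] lemma rnk03 : (tmChildRank 0 3 : ℕ) = 2 := rfl
@[simp] lemma rnk10 : (tmChildRank 1 0 : ℕ) = 0 := rfl
@[simp] lemma rnk11 : (tmChildRank 1 1 : ℕ) = 2 := rfl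
@[simp] lemma rnk12 : (tmChildRank 1 2 : ℕ) = 3 := rfl
@[simp] lemma rnk13 : (tmChildRank 1 3 : ℕ) = 1 := rfl

lemma tmIndex_cons0 (τ : Fin 2) (p : List (Fin 4)) :
    tmIndex τ ((0:Fin 4) :: p) = (tmChildRank τ 0 : ℕ) * 4 ^ p.length + tmIndex τ p := by
  show _ * _ + tmIndex (if (0:Fin 4) = 3 then 1 - τ else τ) p = _
  rw [if_neg (by decide)]
lemma tmIndex_cons1 (τ : Fin 2) (p : List (Fin 4)) :
    tmIndex τ ((1:Fin 4) :: p) = (tmChildRank τ 1 : ℕ) * 4 ^ p.length + tmIndex τ p := by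
  show _ * _ + tmIndex (if (1:Fin 4) = 3 then 1 - τ else τ) p = _
  rw [if_neg (by decide)]
lemma tmIndex_cons2 (τ : Fin 2) (p : List (Fin 4)) :
    tmIndex τ ((2:Fin 4) :: p) = (tmChildRank τ 2 : ℕ) * 4 ^ p.length + tmIndex τ p := by
  show _ * _ + tmIndex (if (2:Fin 4) = 3 then 1 - τ else τ) p = _
  rw [if_neg (by decide)]
lemma tmIndex_cons3 (τ : Fin 2) (p : List (Fin 4)) :
    tmIndex τ ((3:Fin 4) :: p) = (tmChildRank τ 3 : ℕ) * 4 ^ p.length + tmIndex (1 - τ) p := by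
  show _ * _ + tmIndex (if (3:Fin 4) = 3 then 1 - τ else τ) p = _
  norm_num

lemma tmIndex_lt (τ : Fin 2) : ∀ p : List (Fin 4), tmIndex τ p < 4 ^ p.length
  | [] => by simp [tmIndex]
  | i :: p => by
    have h := tmIndex_lt (if i = 3 then 1 - τ else τ) p
    have hr : (tmChildRank τ i : ℕ) ≤ 3 := Nat.lt_succ_iff.mp (tmChildRank τ i).isLt
    have h3 : (tmChildRank τ i : ℕ) * 4 ^ p.length ≤ 3 * 4 ^ p.length :=
      Nat.mul_le_mul_right _ hr
    show (tmChildRank τ i : ℕ) * 4 ^ p.length + tmIndex (if i = 3 then 1 - τ else τ) p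
      < 4 ^ (p.length + 1)
    rw [pow_succ]
    omega

lemma cross_idx {r1 r2 a b n : ℕ} (h : r1 < r2) (ha : a < 4 ^ n) :
    r1 * 4 ^ n + a < r2 * 4 ^ n + b :=
  calc r1 * 4 ^ n + a < r1 * 4 ^ n + 4 ^ n := by omega
    _ = (r1 + 1) * 4 ^ n := by ring
    _ ≤ r2 * 4 ^ n := Nat.mul_le_mul_right _ h
    _ ≤ r2 * 4 ^ n + b := Nat.le_add_right _ _

lemma rank2 (τ : Fin 2) : (tmChildRank τ 2 : ℕ) = 3 := by fin_cases τ <;> rfl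
lemma rank0 (τ : Fin 2) : (tmChildRank τ 0 : ℕ) = 0 := by fin_cases τ <;> rfl

lemma tmIndex_replicate_two (τ : Fin 2) : ∀ n, tmIndex τ (List.replicate n 2) = 4 ^ n - 1
  | 0 => rfl
  | n + 1 => by
    rw [List.replicate_succ]
    rw [tmIndex_cons2, rank2, tmIndex_replicate_two τ n, List.length_replicate, pow_succ]
    have : 0 < 4 ^ n := Nat.pow_pos (by norm_num)
    omega

lemma tmIndex_replicate_zero (τ : Fin 2) : ∀ n, tmIndex τ (List.replicate n 0) = 0
  | 0 => rfl
  | n + 1 => by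
    rw [List.replicate_succ, tmIndex_cons0, rank0, tmIndex_replicate_zero τ n]
    simp

lemma max_unique : ∀ (p : List (Fin 4)) (τ : Fin 2), tmIndex τ p = 4 ^ p.length - 1 →
    p = List.replicate p.length 2 := by
  intro p
  induction p with
  | nil => simp
  | cons i p ih =>
    intro τ h
    have hlt : tmIndex (if i = 3 then 1 - τ else τ) p < 4 ^ p.length := tmIndex_lt _ p
    have hpos : 0 < 4 ^ p.length := Nat.pow_pos (by norm_num)
    have hcons : tmIndex τ (i :: p) =
        (tmChildRank τ i : ℕ) * 4 ^ p.length + tmIndex (if i = 3 then 1 - τ else τ) p := rfl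
    rw [hcons] at h
    have hlen : (i :: p).length = p.length + 1 := rfl
    rw [hlen, pow_succ] at h
    have hi2 : i = 2 ∧ tmIndex (if i = 3 then 1 - τ else τ) p = 4 ^ p.length - 1 := by
      fin_cases i <;> fin_cases τ <;> simp at h hlt ⊢ <;> omega
    obtain ⟨rfl, h2⟩ := hi2
    have : p = List.replicate p.length 2 := ih _ (by simpa using h2)
    rw [List.length_cons, List.replicate_succ]
    exact congrArg _ this

lemma min_unique : ∀ (p : List (Fin 4)) (τ : Fin 2), tmIndex τ p = 0 →
    p = List.replicate p.length 0 := by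
  intro p
  induction p with
  | nil => simp
  | cons i p ih =>
    intro τ h
    have hpos : 0 < 4 ^ p.length := Nat.pow_pos (by norm_num)
    have hcons : tmIndex τ (i :: p) =
        (tmChildRank τ i : ℕ) * 4 ^ p.length + tmIndex (if i = 3 then 1 - τ else τ) p := rfl
    rw [hcons] at h
    have hi0 : i = 0 ∧ tmIndex (if i = 3 then 1 - τ else τ) p = 0 := by
      fin_cases i <;> fin_cases τ <;> simp at h hpos ⊢ <;> omega
    obtain ⟨rfl, h2⟩ := hi0
    have : p = List.replicate p.length 0 := ih _ (by simpa using h2)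
    rw [List.length_cons, List.replicate_succ]
    exact congrArg _ this

lemma idx_lt_edge (τ : Fin 2) (a b : Fin 3) (s : List Bool) :
    tmIndex τ (edgePath a b s) < 4 ^ s.length := by
  have := tmIndex_lt τ (edgePath a b s)
  rwa [edgePath_length] at this

lemma liftS {x : Fin 3 → TMV} {n : ℕ} (τ : Fin 2) (i : Fin 4) {p' q' : List (Fin 4)}
    (hp : p'.length = n) (hl : q'.length = n)
    (hi : tmIndex (if i = 3 then 1 - τ else τ) p' < tmIndex (if i = 3 then 1 - τ else τ) q')
    (hn : Nbr (beyChild x i) p' q') :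
    (i :: q').length = n + 1 ∧ tmIndex τ (i :: p') < tmIndex τ (i :: q') ∧
      Nbr x (i :: p') (i :: q') := by
  refine ⟨by simp [hl], ?_, hn⟩
  show (tmChildRank τ i : ℕ) * 4 ^ p'.length + tmIndex (if i = 3 then 1 - τ else τ) p'
    < (tmChildRank τ i : ℕ) * 4 ^ q'.length + tmIndex (if i = 3 then 1 - τ else τ) q'
  rw [hp, hl]
  exact Nat.add_lt_add_left hi _

lemma liftP {x : Fin 3 → TMV} {n : ℕ} (τ : Fin 2) (i : Fin 4) {p' q' : List (Fin 4)}
    (hp : p'.length = n) (hl : q'.length = n)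
    (hi : tmIndex (if i = 3 then 1 - τ else τ) q' < tmIndex (if i = 3 then 1 - τ else τ) p')
    (hn : Nbr (beyChild x i) p' q') :
    (i :: q').length = n + 1 ∧ tmIndex τ (i :: q') < tmIndex τ (i :: p') ∧
      Nbr x (i :: p') (i :: q') := by
  refine ⟨by simp [hl], ?_, hn⟩
  show (tmChildRank τ i : ℕ) * 4 ^ q'.length + tmIndex (if i = 3 then 1 - τ else τ) q'
    < (tmChildRank τ i : ℕ) * 4 ^ p'.length + tmIndex (if i = 3 then 1 - τ else τ) p'
  rw [hp, hl]
  exact Nat.add_lt_add_left hi _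

@[simp] lemma fmk0 (h : (0:ℕ) < 4) : (⟨0, h⟩ : Fin 4) = 0 := rfl
@[simp] lemma fmk1 (h : (1:ℕ) < 4) : (⟨1, h⟩ : Fin 4) = 1 := rfl
@[simp] lemma fmk2 (h : (2:ℕ) < 4) : (⟨2, h⟩ : Fin 4) = 2 := rfl
@[simp] lemma fmk3 (h : (3:ℕ) < 4) : (⟨3, h⟩ : Fin 4) = 3 := rfl

lemma mainInd : ∀ n : ℕ,
    (∀ x, HB x → ∀ p : List (Fin 4), p.length = n →
      (∃ q, q.length = n ∧ tmIndex 0 p < tmIndex 0 q ∧ Nbr x p q) ∨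
        (∃ s, p = edgePath 1 2 s)) ∧
    (∀ x, HB x → ∀ p : List (Fin 4), p.length = n →
      (∃ q, q.length = n ∧ tmIndex 0 p < tmIndex 0 q ∧ Nbr x p q) ∨
        (∃ s, p = edgePath 0 2 s)) ∧
    (∀ x, HB x → ∀ p : List (Fin 4), p.length = n →
      (∃ q, q.length = n ∧ tmIndex 1 p < tmIndex 1 q ∧ Nbr x p q) ∨
        (∃ s, p = edgePath 1 2 s)) ∧
    (∀ x, HB x → ∀ p : List (Fin 4), p.length = n → p ≠ List.replicate n 2 →
      ∃ q, q.length = n ∧ tmIndex 0 p < tmIndex 0 q ∧ Nbr x p q) ∧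
    (∀ x, HB x → ∀ p : List (Fin 4), p.length = n →
      (∃ q, q.length = n ∧ tmIndex 0 q < tmIndex 0 p ∧ Nbr x p q) ∨
        (∃ s, p = edgePath 0 1 s)) ∧
    (∀ x, HB x → ∀ p : List (Fin 4), p.length = n →
      (∃ q, q.length = n ∧ tmIndex 1 q < tmIndex 1 p ∧ Nbr x p q) ∨
        (∃ s, p = edgePath 0 1 s)) ∧
    (∀ x, HB x → ∀ p : List (Fin 4), p.length = n →
      (∃ q, q.length = n ∧ tmIndex 1 q < tmIndex 1 p ∧ Nbr x p q) ∨
        (∃ s, p = edgePath 0 2 s)) ∧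
    (∀ x, HB x → ∀ p : List (Fin 4), p.length = n → p ≠ List.replicate n 0 →
      ∃ q, q.length = n ∧ tmIndex 1 q < tmIndex 1 p ∧ Nbr x p q) := by
  intro n
  induction n with
  | zero =>
    refine ⟨?_, ?_, ?_, ?_, ?_, ?_, ?_, ?_⟩ <;> intro x hx p hlen
    · exact Or.inr ⟨[], by simp [List.length_eq_zero_iff.mp hlen, edgePath]⟩
    · exact Or.inr ⟨[], by simp [List.length_eq_zero_iff.mp hlen, edgePath]⟩
    · exact Or.inr ⟨[], by simp [List.length_eq_zero_iff.mp hlen, edgePath]⟩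
    · exact fun hne => (hne (by simp [List.length_eq_zero_iff.mp hlen])).elim
    · exact Or.inr ⟨[], by simp [List.length_eq_zero_iff.mp hlen, edgePath]⟩
    · exact Or.inr ⟨[], by simp [List.length_eq_zero_iff.mp hlen, edgePath]⟩
    · exact Or.inr ⟨[], by simp [List.length_eq_zero_iff.mp hlen, edgePath]⟩
    · exact fun hne => (hne (by simp [List.length_eq_zero_iff.mp hlen])).elim
  | succ n ih =>
    obtain ⟨hA0, hB0, hE1, hP0, hC010, hC011, hC021, hP1⟩ := ih
    refine ⟨?_, ?_, ?_, ?_, ?_, ?_, ?_, ?_⟩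
    -- A0 : type 0, exit edge (1,2)
    · intro x hx p hlen
      cases p with
      | nil => simp at hlen
      | cons i p' =>
        have hp' : p'.length = n := by simpa using hlen
        fin_cases i
        all_goals simp only [fmk0, fmk1, fmk2, fmk3]
        · rcases hA0 (beyChild x 0) (HB_beyChild hx 0) p' hp' with ⟨q', h1, h2, h3⟩ | ⟨s, rfl⟩
          · exact Or.inl ⟨0 :: q', liftS 0 0 hp' h1 h2 h3⟩
          · have hs : s.length = n := by simpa using hp'
            refine Or.inl ⟨3 :: edgePath 0 1 s, by simp [hs], ?_, pairA hx s⟩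
            beta_reduce
            rw [tmIndex_cons0, tmIndex_cons3, rnk00, rnk03]
            simp only [edgePath_length]
            exact cross_idx (by norm_num) (idx_lt_edge _ _ _ s)
        · rcases hA0 (beyChild x 1) (HB_beyChild hx 1) p' hp' with ⟨q', h1, h2, h3⟩ | ⟨s, rfl⟩
          · exact Or.inl ⟨1 :: q', liftS 0 1 hp' h1 h2 h3⟩
          · exact Or.inr ⟨false :: s, rfl⟩
        · rcases hA0 (beyChild x 2) (HB_beyChild hx 2) p' hp' with ⟨q', h1, h2, h3⟩ | ⟨s, rfl⟩
          · exact Or.inl ⟨2 :: q', liftS 0 2 hp' h1 h2 h3⟩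
          · exact Or.inr ⟨true :: s, rfl⟩
        · rcases hE1 (beyChild x 3) (HB_beyChild hx 3) p' hp' with ⟨q', h1, h2, h3⟩ | ⟨s, rfl⟩
          · exact Or.inl ⟨3 :: q', liftS 0 3 hp' h1 h2 h3⟩
          · have hs : s.length = n := by simpa using hp'
            refine Or.inl ⟨2 :: edgePath 0 1 s, by simp [hs], ?_, pairC hx s⟩
            beta_reduce
            rw [tmIndex_cons3, tmIndex_cons2, rnk03, rnk02]
            simp only [edgePath_length]
            exact cross_idx (by norm_num) (idx_lt_edge _ _ _ s)
    -- B0 : type 0, exit edge (0,2)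
    · intro x hx p hlen
      cases p with
      | nil => simp at hlen
      | cons i p' =>
        have hp' : p'.length = n := by simpa using hlen
        fin_cases i
        all_goals simp only [fmk0, fmk1, fmk2, fmk3]
        · rcases hB0 (beyChild x 0) (HB_beyChild hx 0) p' hp' with ⟨q', h1, h2, h3⟩ | ⟨s, rfl⟩
          · exact Or.inl ⟨0 :: q', liftS 0 0 hp' h1 h2 h3⟩
          · exact Or.inr ⟨false :: s, rfl⟩
        · rcases hB0 (beyChild x 1) (HB_beyChild hx 1) p' hp' with ⟨q', h1, h2, h3⟩ | ⟨s, rfl⟩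
          · exact Or.inl ⟨1 :: q', liftS 0 1 hp' h1 h2 h3⟩
          · have hs : s.length = n := by simpa using hp'
            refine Or.inl ⟨3 :: edgePath 0 2 s, by simp [hs], ?_, pairB hx s⟩
            beta_reduce
            rw [tmIndex_cons1, tmIndex_cons3, rnk01, rnk03]
            simp only [edgePath_length]
            exact cross_idx (by norm_num) (idx_lt_edge _ _ _ s)
        · rcases hB0 (beyChild x 2) (HB_beyChild hx 2) p' hp' with ⟨q', h1, h2, h3⟩ | ⟨s, rfl⟩
          · exact Or.inl ⟨2 :: q', liftS 0 2 hp' h1 h2 h3⟩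
          · exact Or.inr ⟨true :: s, rfl⟩
        · rcases hE1 (beyChild x 3) (HB_beyChild hx 3) p' hp' with ⟨q', h1, h2, h3⟩ | ⟨s, rfl⟩
          · exact Or.inl ⟨3 :: q', liftS 0 3 hp' h1 h2 h3⟩
          · have hs : s.length = n := by simpa using hp'
            refine Or.inl ⟨2 :: edgePath 0 1 s, by simp [hs], ?_, pairC hx s⟩
            beta_reduce
            rw [tmIndex_cons3, tmIndex_cons2, rnk03, rnk02]
            simp only [edgePath_length]
            exact cross_idx (by norm_num) (idx_lt_edge _ _ _ s)
    -- E1 : type 1, exit edge (1,2)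
    · intro x hx p hlen
      cases p with
      | nil => simp at hlen
      | cons i p' =>
        have hp' : p'.length = n := by simpa using hlen
        fin_cases i
        all_goals simp only [fmk0, fmk1, fmk2, fmk3]
        · rcases hE1 (beyChild x 0) (HB_beyChild hx 0) p' hp' with ⟨q', h1, h2, h3⟩ | ⟨s, rfl⟩
          · exact Or.inl ⟨0 :: q', liftS 1 0 hp' h1 h2 h3⟩
          · have hs : s.length = n := by simpa using hp'
            refine Or.inl ⟨3 :: edgePath 0 1 s, by simp [hs], ?_, pairA hx s⟩
            beta_reduce
            rw [tmIndex_cons0, tmIndex_cons3, rnk10, rnk13]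
            simp only [edgePath_length]
            exact cross_idx (by norm_num) (idx_lt_edge _ _ _ s)
        · rcases hE1 (beyChild x 1) (HB_beyChild hx 1) p' hp' with ⟨q', h1, h2, h3⟩ | ⟨s, rfl⟩
          · exact Or.inl ⟨1 :: q', liftS 1 1 hp' h1 h2 h3⟩
          · exact Or.inr ⟨false :: s, rfl⟩
        · rcases hE1 (beyChild x 2) (HB_beyChild hx 2) p' hp' with ⟨q', h1, h2, h3⟩ | ⟨s, rfl⟩
          · exact Or.inl ⟨2 :: q', liftS 1 2 hp' h1 h2 h3⟩
          · exact Or.inr ⟨true :: s, rfl⟩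
        · rcases hA0 (beyChild x 3) (HB_beyChild hx 3) p' hp' with ⟨q', h1, h2, h3⟩ | ⟨s, rfl⟩
          · exact Or.inl ⟨3 :: q', liftS 1 3 hp' h1 h2 h3⟩
          · have hs : s.length = n := by simpa using hp'
            refine Or.inl ⟨2 :: edgePath 0 1 s, by simp [hs], ?_, pairC hx s⟩
            beta_reduce
            rw [tmIndex_cons3, tmIndex_cons2, rnk13, rnk12]
            simp only [edgePath_length]
            exact cross_idx (by norm_num) (idx_lt_edge _ _ _ s)
    -- P0 : type 0, successor everywhere except max
    · intro x hx p hlen hne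
      cases p with
      | nil => simp at hlen
      | cons i p' =>
        have hp' : p'.length = n := by simpa using hlen
        fin_cases i
        all_goals simp only [fmk0, fmk1, fmk2, fmk3]
        · rcases hA0 (beyChild x 0) (HB_beyChild hx 0) p' hp' with ⟨q', h1, h2, h3⟩ | ⟨s, rfl⟩
          · exact ⟨0 :: q', liftS 0 0 hp' h1 h2 h3⟩
          · have hs : s.length = n := by simpa using hp'
            refine ⟨3 :: edgePath 0 1 s, by simp [hs], ?_, pairA hx s⟩
            beta_reduce
            rw [tmIndex_cons0, tmIndex_cons3, rnk00, rnk03]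
            simp only [edgePath_length]
            exact cross_idx (by norm_num) (idx_lt_edge _ _ _ s)
        · rcases hB0 (beyChild x 1) (HB_beyChild hx 1) p' hp' with ⟨q', h1, h2, h3⟩ | ⟨s, rfl⟩
          · exact ⟨1 :: q', liftS 0 1 hp' h1 h2 h3⟩
          · have hs : s.length = n := by simpa using hp'
            refine ⟨3 :: edgePath 0 2 s, by simp [hs], ?_, pairB hx s⟩
            beta_reduce
            rw [tmIndex_cons1, tmIndex_cons3, rnk01, rnk03]
            simp only [edgePath_length]
            exact cross_idx (by norm_num) (idx_lt_edge _ _ _ s)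
        · have hne' : p' ≠ List.replicate n 2 := by
            intro h
            exact hne (by simp [h, List.replicate_succ])
          obtain ⟨q', h1, h2, h3⟩ := hP0 (beyChild x 2) (HB_beyChild hx 2) p' hp' hne'
          exact ⟨2 :: q', liftS 0 2 hp' h1 h2 h3⟩
        · rcases hE1 (beyChild x 3) (HB_beyChild hx 3) p' hp' with ⟨q', h1, h2, h3⟩ | ⟨s, rfl⟩
          · exact ⟨3 :: q', liftS 0 3 hp' h1 h2 h3⟩
          · have hs : s.length = n := by simpa using hp'
            refine ⟨2 :: edgePath 0 1 s, by simp [hs], ?_, pairC hx s⟩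
            beta_reduce
            rw [tmIndex_cons3, tmIndex_cons2, rnk03, rnk02]
            simp only [edgePath_length]
            exact cross_idx (by norm_num) (idx_lt_edge _ _ _ s)
    -- C010 : type 0, predecessor or exit edge (0,1)
    · intro x hx p hlen
      cases p with
      | nil => simp at hlen
      | cons i p' =>
        have hp' : p'.length = n := by simpa using hlen
        fin_cases i
        all_goals simp only [fmk0, fmk1, fmk2, fmk3]
        · rcases hC010 (beyChild x 0) (HB_beyChild hx 0) p' hp' with ⟨q', h1, h2, h3⟩ | ⟨s, rfl⟩
          · exact Or.inl ⟨0 :: q', liftP 0 0 hp' h1 h2 h3⟩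
          · exact Or.inr ⟨false :: s, rfl⟩
        · rcases hC010 (beyChild x 1) (HB_beyChild hx 1) p' hp' with ⟨q', h1, h2, h3⟩ | ⟨s, rfl⟩
          · exact Or.inl ⟨1 :: q', liftP 0 1 hp' h1 h2 h3⟩
          · exact Or.inr ⟨true :: s, rfl⟩
        · rcases hC010 (beyChild x 2) (HB_beyChild hx 2) p' hp' with ⟨q', h1, h2, h3⟩ | ⟨s, rfl⟩
          · exact Or.inl ⟨2 :: q', liftP 0 2 hp' h1 h2 h3⟩
          · have hs : s.length = n := by simpa using hp'
            refine Or.inl ⟨3 :: edgePath 1 2 s, by simp [hs], ?_,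
              triFaceNbr_symm (pairC hx s)⟩
            beta_reduce
            rw [tmIndex_cons3, tmIndex_cons2, rnk03, rnk02]
            simp only [edgePath_length]
            exact cross_idx (by norm_num) (idx_lt_edge _ _ _ s)
        · rcases hC011 (beyChild x 3) (HB_beyChild hx 3) p' hp' with ⟨q', h1, h2, h3⟩ | ⟨s, rfl⟩
          · exact Or.inl ⟨3 :: q', liftP 0 3 hp' h1 h2 h3⟩
          · have hs : s.length = n := by simpa using hp'
            refine Or.inl ⟨0 :: edgePath 1 2 s, by simp [hs], ?_,
              triFaceNbr_symm (pairA hx s)⟩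
            beta_reduce
            rw [tmIndex_cons0, tmIndex_cons3, rnk00, rnk03]
            simp only [edgePath_length]
            exact cross_idx (by norm_num) (idx_lt_edge _ _ _ s)
    -- C011 : type 1, predecessor or exit edge (0,1)
    · intro x hx p hlen
      cases p with
      | nil => simp at hlen
      | cons i p' =>
        have hp' : p'.length = n := by simpa using hlen
        fin_cases i
        all_goals simp only [fmk0, fmk1, fmk2, fmk3]
        · rcases hC011 (beyChild x 0) (HB_beyChild hx 0) p' hp' with ⟨q', h1, h2, h3⟩ | ⟨s, rfl⟩
          · exact Or.inl ⟨0 :: q', liftP 1 0 hp' h1 h2 h3⟩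
          · exact Or.inr ⟨false :: s, rfl⟩
        · rcases hC011 (beyChild x 1) (HB_beyChild hx 1) p' hp' with ⟨q', h1, h2, h3⟩ | ⟨s, rfl⟩
          · exact Or.inl ⟨1 :: q', liftP 1 1 hp' h1 h2 h3⟩
          · exact Or.inr ⟨true :: s, rfl⟩
        · rcases hC011 (beyChild x 2) (HB_beyChild hx 2) p' hp' with ⟨q', h1, h2, h3⟩ | ⟨s, rfl⟩
          · exact Or.inl ⟨2 :: q', liftP 1 2 hp' h1 h2 h3⟩
          · have hs : s.length = n := by simpa using hp'
            refine Or.inl ⟨3 :: edgePath 1 2 s, by simp [hs], ?_,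
              triFaceNbr_symm (pairC hx s)⟩
            beta_reduce
            rw [tmIndex_cons3, tmIndex_cons2, rnk13, rnk12]
            simp only [edgePath_length]
            exact cross_idx (by norm_num) (idx_lt_edge _ _ _ s)
        · rcases hC010 (beyChild x 3) (HB_beyChild hx 3) p' hp' with ⟨q', h1, h2, h3⟩ | ⟨s, rfl⟩
          · exact Or.inl ⟨3 :: q', liftP 1 3 hp' h1 h2 h3⟩
          · have hs : s.length = n := by simpa using hp'
            refine Or.inl ⟨0 :: edgePath 1 2 s, by simp [hs], ?_,
              triFaceNbr_symm (pairA hx s)⟩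
            beta_reduce
            rw [tmIndex_cons0, tmIndex_cons3, rnk10, rnk13]
            simp only [edgePath_length]
            exact cross_idx (by norm_num) (idx_lt_edge _ _ _ s)
    -- C021 : type 1, predecessor or exit edge (0,2)
    · intro x hx p hlen
      cases p with
      | nil => simp at hlen
      | cons i p' =>
        have hp' : p'.length = n := by simpa using hlen
        fin_cases i
        all_goals simp only [fmk0, fmk1, fmk2, fmk3]
        · rcases hC021 (beyChild x 0) (HB_beyChild hx 0) p' hp' with ⟨q', h1, h2, h3⟩ | ⟨s, rfl⟩
          · exact Or.inl ⟨0 :: q', liftP 1 0 hp' h1 h2 h3⟩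
          · exact Or.inr ⟨false :: s, rfl⟩
        · rcases hC021 (beyChild x 1) (HB_beyChild hx 1) p' hp' with ⟨q', h1, h2, h3⟩ | ⟨s, rfl⟩
          · exact Or.inl ⟨1 :: q', liftP 1 1 hp' h1 h2 h3⟩
          · have hs : s.length = n := by simpa using hp'
            refine Or.inl ⟨3 :: edgePath 0 2 s, by simp [hs], ?_, pairB hx s⟩
            beta_reduce
            rw [tmIndex_cons1, tmIndex_cons3, rnk11, rnk13]
            simp only [edgePath_length]
            exact cross_idx (by norm_num) (idx_lt_edge _ _ _ s)
        · rcases hC011 (beyChild x 2) (HB_beyChild hx 2) p' hp' with ⟨q', h1, h2, h3⟩ | ⟨s, rfl⟩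
          · exact Or.inl ⟨2 :: q', liftP 1 2 hp' h1 h2 h3⟩
          · have hs : s.length = n := by simpa using hp'
            refine Or.inl ⟨3 :: edgePath 1 2 s, by simp [hs], ?_,
              triFaceNbr_symm (pairC hx s)⟩
            beta_reduce
            rw [tmIndex_cons3, tmIndex_cons2, rnk13, rnk12]
            simp only [edgePath_length]
            exact cross_idx (by norm_num) (idx_lt_edge _ _ _ s)
        · rcases hC010 (beyChild x 3) (HB_beyChild hx 3) p' hp' with ⟨q', h1, h2, h3⟩ | ⟨s, rfl⟩
          · exact Or.inl ⟨3 :: q', liftP 1 3 hp' h1 h2 h3⟩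
          · have hs : s.length = n := by simpa using hp'
            refine Or.inl ⟨0 :: edgePath 1 2 s, by simp [hs], ?_,
              triFaceNbr_symm (pairA hx s)⟩
            beta_reduce
            rw [tmIndex_cons0, tmIndex_cons3, rnk10, rnk13]
            simp only [edgePath_length]
            exact cross_idx (by norm_num) (idx_lt_edge _ _ _ s)
    -- P1 : type 1, predecessor everywhere except min
    · intro x hx p hlen hne
      cases p with
      | nil => simp at hlen
      | cons i p' =>
        have hp' : p'.length = n := by simpa using hlen
        fin_cases i
        all_goals simp only [fmk0, fmk1, fmk2, fmk3]
        · have hne' : p' ≠ List.replicate n 0 := by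
            intro h
            exact hne (by simp [h, List.replicate_succ])
          obtain ⟨q', h1, h2, h3⟩ := hP1 (beyChild x 0) (HB_beyChild hx 0) p' hp' hne'
          exact ⟨0 :: q', liftP 1 0 hp' h1 h2 h3⟩
        · rcases hC021 (beyChild x 1) (HB_beyChild hx 1) p' hp' with ⟨q', h1, h2, h3⟩ | ⟨s, rfl⟩
          · exact ⟨1 :: q', liftP 1 1 hp' h1 h2 h3⟩
          · have hs : s.length = n := by simpa using hp'
            refine ⟨3 :: edgePath 0 2 s, by simp [hs], ?_, pairB hx s⟩
            beta_reduce
            rw [tmIndex_cons1, tmIndex_cons3, rnk11, rnk13]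
            simp only [edgePath_length]
            exact cross_idx (by norm_num) (idx_lt_edge _ _ _ s)
        · rcases hC011 (beyChild x 2) (HB_beyChild hx 2) p' hp' with ⟨q', h1, h2, h3⟩ | ⟨s, rfl⟩
          · exact ⟨2 :: q', liftP 1 2 hp' h1 h2 h3⟩
          · have hs : s.length = n := by simpa using hp'
            refine ⟨3 :: edgePath 1 2 s, by simp [hs], ?_, triFaceNbr_symm (pairC hx s)⟩
            beta_reduce
            rw [tmIndex_cons3, tmIndex_cons2, rnk13, rnk12]
            simp only [edgePath_length]
            exact cross_idx (by norm_num) (idx_lt_edge _ _ _ s)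
        · rcases hC010 (beyChild x 3) (HB_beyChild hx 3) p' hp' with ⟨q', h1, h2, h3⟩ | ⟨s, rfl⟩
          · exact ⟨3 :: q', liftP 1 3 hp' h1 h2 h3⟩
          · have hs : s.length = n := by simpa using hp'
            refine ⟨0 :: edgePath 1 2 s, by simp [hs], ?_, triFaceNbr_symm (pairA hx s)⟩
            beta_reduce
            rw [tmIndex_cons0, tmIndex_cons3, rnk10, rnk13]
            simp only [edgePath_length]
            exact cross_idx (by norm_num) (idx_lt_edge _ _ _ s)

/-- For a root triangle of type `τ` uniformly refined to level `L`: if `τ = 0`, every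
contiguous TM segment containing the last level-`L` subtriangle in TM order is
face-connected; if `τ = 1`, every contiguous TM segment containing the first level-`L`
subtriangle in TM order is face-connected. -/
theorem tm_one_sided_segment_connected (x0 : Fin 3 → TMV)
    (hx0 : AffineIndependent ℝ x0) (L : ℕ) (τ : Fin 2)
    (S : Set (List (Fin 4))) (hS : tmSegment τ L S) :
    (τ = 0 → (∃ p ∈ S, tmIndex τ p = 4 ^ L - 1) → triFaceConnected x0 S) ∧
    (τ = 1 → (∃ p ∈ S, tmIndex τ p = 0) → triFaceConnected x0 S) := by
  have hHB : HB x0 := HB_of_affineIndependent hx0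
  obtain ⟨_, _, _, hP0, _, _, _, hP1⟩ := mainInd L
  constructor
  · rintro rfl ⟨p₀, hp₀S, hp₀idx⟩
    have hlen₀ : p₀.length = L := hS.1 p₀ hp₀S
    have hp₀M : p₀ = List.replicate L 2 := by
      have := max_unique p₀ 0 (by rw [hlen₀]; exact hp₀idx)
      rwa [hlen₀] at this
    set M : List (Fin 4) := List.replicate L 2 with hM
    have hMS : M ∈ S := hp₀M ▸ hp₀S
    have hMidx : tmIndex 0 M = 4 ^ L - 1 := tmIndex_replicate_two 0 L
    have hMlen : M.length = L := by simp [hM]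
    set R := fun a b => a ∈ S ∧ b ∈ S ∧ triFaceNbr (tmVerts x0 a) (tmVerts x0 b) with hR
    have key : ∀ m (p : List (Fin 4)), p ∈ S → 4 ^ L - tmIndex 0 p ≤ m →
        Relation.ReflTransGen R p M := by
      intro m
      induction m with
      | zero =>
        intro p hp hm
        have h := tmIndex_lt 0 p
        rw [hS.1 p hp] at h
        omega
      | succ m ihm =>
        intro p hp hm
        by_cases hpM : p = M
        · exact hpM ▸ Relation.ReflTransGen.refl
        · have hplen : p.length = L := hS.1 p hp
          obtain ⟨q, hqlen, hqidx, hqnbr⟩ := hP0 x0 hHB p hplen hpM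
          have hqlt : tmIndex 0 q < 4 ^ L := by
            have := tmIndex_lt 0 q; rwa [hqlen] at this
          have hqS : q ∈ S :=
            hS.2 p q M hplen hqlen hMlen hp hMS (le_of_lt hqidx) (by rw [hMidx]; omega)
          refine Relation.ReflTransGen.head ⟨hp, hqS, hqnbr⟩ (ihm q hqS ?_)
          omega
    have hsymm : Symmetric R := by
      rintro a b ⟨ha, hb, hn⟩
      exact ⟨hb, ha, triFaceNbr_symm hn⟩
    intro p hp q hq
    have h1 := key (4 ^ L) p hp (Nat.sub_le _ _)
    have h2 := key (4 ^ L) q hq (Nat.sub_le _ _)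
    exact h1.trans (haveI : Std.Symm R := ⟨fun _ _ h => hsymm h⟩; Std.Symm.symm _ _ h2)
  · rintro rfl ⟨p₀, hp₀S, hp₀idx⟩
    have hlen₀ : p₀.length = L := hS.1 p₀ hp₀S
    have hp₀M : p₀ = List.replicate L 0 := by
      have := min_unique p₀ 1 hp₀idx
      rwa [hlen₀] at this
    set M : List (Fin 4) := List.replicate L 0 with hM
    have hMS : M ∈ S := hp₀M ▸ hp₀S
    have hMidx : tmIndex 1 M = 0 := tmIndex_replicate_zero 1 L
    have hMlen : M.length = L := by simp [hM]
    set R := fun a b => a ∈ S ∧ b ∈ S ∧ triFaceNbr (tmVerts x0 a) (tmVerts x0 b) with hR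
    have key : ∀ m (p : List (Fin 4)), p ∈ S → tmIndex 1 p ≤ m →
        Relation.ReflTransGen R p M := by
      intro m
      induction m with
      | zero =>
        intro p hp hm
        have hp0 : p = M := by
          have := min_unique p 1 (by omega)
          rw [hS.1 p hp] at this
          exact this.trans hM.symm
        exact hp0 ▸ Relation.ReflTransGen.refl
      | succ m ihm =>
        intro p hp hm
        by_cases hpM : p = M
        · exact hpM ▸ Relation.ReflTransGen.refl
        · have hplen : p.length = L := hS.1 p hp
          obtain ⟨q, hqlen, hqidx, hqnbr⟩ := hP1 x0 hHB p hplen hpM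
          have hqS : q ∈ S :=
            hS.2 M q p hMlen hqlen hplen hMS hp (by rw [hMidx]; omega) (le_of_lt hqidx)
          refine Relation.ReflTransGen.head ⟨hp, hqS, hqnbr⟩ (ihm q hqS ?_)
          omega
    have hsymm : Symmetric R := by
      rintro a b ⟨ha, hb, hn⟩
      exact ⟨hb, ha, triFaceNbr_symm hn⟩
    intro p hp q hq
    have h1 := key (tmIndex 1 p) p hp le_rfl
    have h2 := key (tmIndex 1 q) q hq le_rfl
    exact h1.trans (haveI : Std.Symm R := ⟨fun _ _ h => hsymm h⟩; Std.Symm.symm _ _ h2)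
end

section
/- Let a root triangle with assigned root type τ ∈ {0,1} be uniformly refined to level L ≥ 1. Let a contiguous TM segment of level-L subtriangles consist of all level-L descendants of one or more consecutive (in the child order) level-1 children of the root, together with exactly one additional level-L subtriangle that immediately precedes or immediately follows this union in the TM order. Then this segment has at most two face-connected components. -/
set_option linter.unnecessarySeqFocus false
set_option linter.unreachableTactic false
set_option linter.unusedTactic false

noncomputable def Phi (y : Fin 3 → TMV) (c : Fin 3 → ℝ) : TMV :=
  c 0 • y 0 + c 1 • y 1 + c 2 • y 2

/-- `Phi y` as a linear map. -/
noncomputable def PhiL (y : Fin 3 → TMV) : (Fin 3 → ℝ) →ₗ[ℝ] TMV where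
  toFun := Phi y
  map_add' a b := by simp only [Phi, Pi.add_apply]; module
  map_smul' t a := by simp only [Phi, Pi.smul_apply, smul_eq_mul, RingHom.id_apply]; module

lemma PhiL_apply (y : Fin 3 → TMV) (c : Fin 3 → ℝ) : PhiL y c = Phi y c := rfl

/-- nondegeneracy in barycentric form -/
def Ndg (y : Fin 3 → TMV) : Prop :=
  ∀ c : Fin 3 → ℝ, c 0 + c 1 + c 2 = 0 → Phi y c = 0 → c = 0

lemma ndg_of_affineIndependent {y : Fin 3 → TMV} (h : AffineIndependent ℝ y) : Ndg y := by
  intro c hs hc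
  have := affineIndependent_iff.1 h Finset.univ c
    (by simpa [Fin.sum_univ_three] using hs)
    (by simpa [Fin.sum_univ_three, Phi] using hc)
  funext i
  exact this i (Finset.mem_univ i)


lemma bey_corner0 (y : Fin 3 → TMV) (j : Fin 3) :
    beyChild y 0 j = y 0 + (2⁻¹ : ℝ) • (y j - y 0) := by
  fin_cases j <;> simp [beyChild, tmMid] <;> module

lemma bey_corner1 (y : Fin 3 → TMV) (j : Fin 3) :
    beyChild y 1 j = y 1 + (2⁻¹ : ℝ) • (y j - y 1) := by
  fin_cases j <;> simp [beyChild, tmMid] <;> module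

lemma bey_corner2 (y : Fin 3 → TMV) (j : Fin 3) :
    beyChild y 2 j = y 2 + (2⁻¹ : ℝ) • (y j - y 2) := by
  fin_cases j <;> simp [beyChild, tmMid] <;> module

lemma corner0 (k : ℕ) (y : Fin 3 → TMV) (j : Fin 3) :
    tmVerts y (List.replicate k (0 : Fin 4)) j
      = y 0 + ((2 : ℝ)⁻¹ ^ k) • (y j - y 0) := by
  induction k generalizing y with
  | zero => simp [tmVerts]
  | succ k ih =>
    rw [List.replicate_succ]
    show tmVerts (beyChild y 0) (List.replicate k (0 : Fin 4)) j = _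
    rw [ih, bey_corner0, bey_corner0, pow_succ]
    module

lemma corner1 (k : ℕ) (y : Fin 3 → TMV) (j : Fin 3) :
    tmVerts y (List.replicate k (1 : Fin 4)) j
      = y 1 + ((2 : ℝ)⁻¹ ^ k) • (y j - y 1) := by
  induction k generalizing y with
  | zero => simp [tmVerts]
  | succ k ih =>
    rw [List.replicate_succ]
    show tmVerts (beyChild y 1) (List.replicate k (1 : Fin 4)) j = _
    rw [ih, bey_corner1, bey_corner1, pow_succ]
    module

lemma corner2 (k : ℕ) (y : Fin 3 → TMV) (j : Fin 3) :
    tmVerts y (List.replicate k (2 : Fin 4)) j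
      = y 2 + ((2 : ℝ)⁻¹ ^ k) • (y j - y 2) := by
  induction k generalizing y with
  | zero => simp [tmVerts]
  | succ k ih =>
    rw [List.replicate_succ]
    show tmVerts (beyChild y 2) (List.replicate k (2 : Fin 4)) j = _
    rw [ih, bey_corner2, bey_corner2, pow_succ]
    module

def dot3 (g c : Fin 3 → ℝ) : ℝ := g 0 * c 0 + g 1 * c 1 + g 2 * c 2

lemma sum1_convex : Convex ℝ {c : Fin 3 → ℝ | c 0 + c 1 + c 2 = 1} := by
  intro x hx y hy s t hs ht hst
  simp only [Set.mem_setOf_eq, Pi.add_apply, Pi.smul_apply, smul_eq_mul] at *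
  nlinarith [hx, hy]

lemma hull_sum1 {a b c : Fin 3 → ℝ} (ha : a 0 + a 1 + a 2 = 1) (hb : b 0 + b 1 + b 2 = 1)
    (hc : c 0 + c 1 + c 2 = 1) {u : Fin 3 → ℝ}
    (hu : u ∈ convexHull ℝ ({a, b, c} : Set (Fin 3 → ℝ))) : u 0 + u 1 + u 2 = 1 := by
  have := convexHull_min (show ({a, b, c} : Set (Fin 3 → ℝ)) ⊆ {c | c 0 + c 1 + c 2 = 1} by
    rintro x (rfl | rfl | rfl) <;> assumption) sum1_convex
  exact this hu

/-- a point in a triangle hull, on the boundary line, lies on the shared edge -/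
lemma hull_on_line {a b c g : Fin 3 → ℝ}
    (hga : dot3 g a = 0) (hgb : dot3 g b = 0) (hgc : dot3 g c ≠ 0)
    {u : Fin 3 → ℝ} (hu : u ∈ convexHull ℝ ({a, b, c} : Set (Fin 3 → ℝ)))
    (hu0 : dot3 g u = 0) : u ∈ segment ℝ a b := by
  rw [show ({a, b, c} : Set (Fin 3 → ℝ)) = insert a {b, c} from rfl,
    convexHull_insert ⟨b, by simp⟩] at hu
  rw [mem_convexJoin] at hu
  obtain ⟨a', ha', z, hz, hu⟩ := hu
  rw [Set.mem_singleton_iff] at ha'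
  subst ha'
  rw [convexHull_pair] at hz
  obtain ⟨α, β, hα, hβ, hαβ, rfl⟩ := hz
  obtain ⟨s, t, hs, ht, hst, rfl⟩ := hu
  have hdz : dot3 g (s • a' + t • (α • b + β • c)) = t * β * dot3 g c := by
    simp only [dot3, Pi.add_apply, Pi.smul_apply, smul_eq_mul] at *
    linear_combination s * hga + t * α * hgb
  rw [hdz] at hu0
  have hTB : t = 0 ∨ β = 0 := by
    rcases mul_eq_zero.1 hu0 with h | h
    · rcases mul_eq_zero.1 h with h | h
      · exact Or.inl h
      · exact Or.inr h
    · exact absurd h hgc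
  rcases hTB with rfl | rfl
  · have hs1 : s = 1 := by linarith
    subst hs1
    simpa using left_mem_segment ℝ a' b
  · have hα1 : α = 1 := by linarith
    subst hα1
    exact ⟨s, t, hs, ht, hst, by simp⟩

lemma hull_dot_nonpos {a b c g : Fin 3 → ℝ}
    (hga : dot3 g a = 0) (hgb : dot3 g b = 0) (hgc : dot3 g c ≤ 0)
    {u : Fin 3 → ℝ} (hu : u ∈ convexHull ℝ ({a, b, c} : Set (Fin 3 → ℝ))) :
    dot3 g u ≤ 0 := by
  rw [show ({a, b, c} : Set (Fin 3 → ℝ)) = insert a {b, c} from rfl,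
    convexHull_insert ⟨b, by simp⟩] at hu
  rw [mem_convexJoin] at hu
  obtain ⟨a', ha', z, hz, hu⟩ := hu
  rw [Set.mem_singleton_iff] at ha'
  subst ha'
  rw [convexHull_pair] at hz
  obtain ⟨α, β, hα, hβ, hαβ, rfl⟩ := hz
  obtain ⟨s, t, hs, ht, hst, rfl⟩ := hu
  have hdz : dot3 g (s • a' + t • (α • b + β • c)) = t * β * dot3 g c := by
    simp only [dot3, Pi.add_apply, Pi.smul_apply, smul_eq_mul] at *
    linear_combination s * hga + t * α * hgb
  rw [hdz]
  have := mul_nonneg ht hβ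
  nlinarith

lemma dot3_neg (g u : Fin 3 → ℝ) : dot3 (-g) u = -dot3 g u := by
  simp [dot3]; ring

lemma Phi_sub (y : Fin 3 → TMV) (u v : Fin 3 → ℝ) :
    Phi y (u - v) = Phi y u - Phi y v := by
  simp only [Phi, Pi.sub_apply]; module

lemma Phi_combo (y : Fin 3 → TMV) (s t : ℝ) (u v : Fin 3 → ℝ) :
    Phi y (s • u + t • v) = s • Phi y u + t • Phi y v := by
  simp only [Phi, Pi.add_apply, Pi.smul_apply, smul_eq_mul]; module

/-- Main separation lemma: two triangles sharing the edge `[Φa, Φb]`, whose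
third vertices are strictly separated by a barycentric functional `g`
vanishing on the edge, are face neighbors. -/
lemma sep (y : Fin 3 → TMV) (hy : Ndg y) (a b c d g : Fin 3 → ℝ)
    (hsa : a 0 + a 1 + a 2 = 1) (hsb : b 0 + b 1 + b 2 = 1)
    (hsc : c 0 + c 1 + c 2 = 1) (hsd : d 0 + d 1 + d 2 = 1)
    (hga : dot3 g a = 0) (hgb : dot3 g b = 0) (hgc : dot3 g c < 0) (hgd : 0 < dot3 g d)
    (X Y : Fin 3 → TMV)
    (hX : ({X 0, X 1, X 2} : Set TMV) = {Phi y a, Phi y b, Phi y c})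
    (hY : ({Y 0, Y 1, Y 2} : Set TMV) = {Phi y a, Phi y b, Phi y d})
    (iX jX : Fin 3) (hijX : iX ≠ jX) (hXa : X iX = Phi y a) (hXb : X jX = Phi y b)
    (iY jY : Fin 3) (hijY : iY ≠ jY) (hYa : Y iY = Phi y a) (hYb : Y jY = Phi y b) :
    triFaceNbr X Y := by
  refine ⟨segment ℝ (Phi y a) (Phi y b),
    ⟨iX, jX, hijX, by rw [hXa, hXb]⟩, ⟨iY, jY, hijY, by rw [hYa, hYb]⟩, ?_⟩
  have himgX : ({Phi y a, Phi y b, Phi y c} : Set TMV) = PhiL y '' {a, b, c} := by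
    simp [Set.image_insert_eq, PhiL_apply]
  have himgY : ({Phi y a, Phi y b, Phi y d} : Set TMV) = PhiL y '' {a, b, d} := by
    simp [Set.image_insert_eq, PhiL_apply]
  apply Set.Subset.antisymm
  · rintro p ⟨hpX, hpY⟩
    rw [triSet, hX, himgX, ← LinearMap.image_convexHull] at hpX
    rw [triSet, hY, himgY, ← LinearMap.image_convexHull] at hpY
    obtain ⟨v1, hv1, hp1⟩ := hpX
    obtain ⟨v2, hv2, hp2⟩ := hpY
    have hveq : v1 = v2 := by
      have hs1 : v1 0 + v1 1 + v1 2 = 1 := hull_sum1 hsa hsb hsc hv1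
      have hs2 : v2 0 + v2 1 + v2 2 = 1 := hull_sum1 hsa hsb hsd hv2
      have h0 : Phi y (v1 - v2) = 0 := by
        rw [Phi_sub]
        rw [PhiL_apply] at hp1 hp2
        rw [hp1, hp2, sub_self]
      have hz := hy (v1 - v2) (by simp only [Pi.sub_apply]; linarith) h0
      exact sub_eq_zero.1 hz
    subst hveq
    have hle : dot3 g v1 ≤ 0 := hull_dot_nonpos hga hgb (le_of_lt hgc) hv1
    have hge : dot3 g v1 ≥ 0 := by
      have := hull_dot_nonpos (g := -g) (by rw [dot3_neg, hga, neg_zero])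
        (by rw [dot3_neg, hgb, neg_zero]) (by rw [dot3_neg]; linarith) hv2
      rw [dot3_neg] at this
      linarith
    have hseg : v1 ∈ segment ℝ a b := hull_on_line hga hgb (ne_of_lt hgc) hv1 (le_antisymm hle hge)
    obtain ⟨s, t, hs, ht, hst, rfl⟩ := hseg
    rw [PhiL_apply] at hp1
    rw [← hp1, Phi_combo]
    exact ⟨s, t, hs, ht, hst, rfl⟩
  · intro p hp
    constructor
    · rw [triSet]
      refine segment_subset_convexHull ?_ ?_ hp
      · rw [show ({X 0, X 1, X 2} : Set TMV) = _ from hX]; simp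
      · rw [show ({X 0, X 1, X 2} : Set TMV) = _ from hX]; simp
    · rw [triSet]
      refine segment_subset_convexHull ?_ ?_ hp
      · rw [show ({Y 0, Y 1, Y 2} : Set TMV) = _ from hY]; simp
      · rw [show ({Y 0, Y 1, Y 2} : Set TMV) = _ from hY]; simp

lemma tmVerts_cons (y : Fin 3 → TMV) (i : Fin 4) (p : List (Fin 4)) :
    tmVerts y (i :: p) = tmVerts (beyChild y i) p := rfl

lemma bridgeB2 (y : Fin 3 → TMV) (hy : Ndg y) (k : ℕ) :
    triFaceNbr (tmVerts y ((1 : Fin 4) :: List.replicate k 0))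
      (tmVerts y ((3 : Fin 4) :: List.replicate k 0)) := by
  set ε : ℝ := (2 : ℝ)⁻¹ ^ k with hεdef
  have hε : 0 < ε := by positivity
  have eX : ∀ j, tmVerts y ((1 : Fin 4) :: List.replicate k 0) j
      = beyChild y 1 0 + ε • (beyChild y 1 j - beyChild y 1 0) := by
    intro j; rw [tmVerts_cons, corner0]
  have eY : ∀ j, tmVerts y ((3 : Fin 4) :: List.replicate k 0) j
      = beyChild y 3 0 + ε • (beyChild y 3 j - beyChild y 3 0) := by
    intro j; rw [tmVerts_cons, corner0]
  have vX0 : tmVerts y ((1 : Fin 4) :: List.replicate k 0) 0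
      = Phi y ![1/2, 1/2, 0] := by
    rw [eX 0]; simp [beyChild, tmMid, Phi]; try module
  have vX1 : tmVerts y ((1 : Fin 4) :: List.replicate k 0) 1
      = Phi y ![1/2 - ε/2, 1/2 + ε/2, 0] := by
    rw [eX 1]; simp [beyChild, tmMid, Phi]; try module
  have vX2 : tmVerts y ((1 : Fin 4) :: List.replicate k 0) 2
      = Phi y ![1/2 - ε/2, 1/2, ε/2] := by
    rw [eX 2]; simp [beyChild, tmMid, Phi]; try module
  have vY0 : tmVerts y ((3 : Fin 4) :: List.replicate k 0) 0
      = Phi y ![1/2, 1/2, 0] := by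
    rw [eY 0]; simp [beyChild, tmMid, Phi]; try module
  have vY1 : tmVerts y ((3 : Fin 4) :: List.replicate k 0) 1
      = Phi y ![1/2, 1/2 - ε/2, ε/2] := by
    rw [eY 1]; simp [beyChild, tmMid, Phi]; try module
  have vY2 : tmVerts y ((3 : Fin 4) :: List.replicate k 0) 2
      = Phi y ![1/2 - ε/2, 1/2, ε/2] := by
    rw [eY 2]; simp [beyChild, tmMid, Phi]; try module
  refine sep y hy ![1/2, 1/2, 0] ![1/2 - ε/2, 1/2, ε/2] ![1/2 - ε/2, 1/2 + ε/2, 0]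
    ![1/2, 1/2 - ε/2, ε/2] ![1, -1, 1]
    (by norm_num [Matrix.cons_val_two]) (by norm_num [Matrix.cons_val_two]; try ring) (by norm_num [Matrix.cons_val_two]; try ring) (by norm_num [Matrix.cons_val_two]; try ring)
    (by simp [dot3]; try ring) (by simp [dot3]; try ring)
    (by simp [dot3]; try nlinarith) (by simp [dot3]; try nlinarith)
    _ _ ?_ ?_ 0 2 (by decide) vX0 vX2 0 2 (by decide) vY0 vY2
  · rw [vX0, vX1, vX2] <;>
    · ext z; simp only [Set.mem_insert_iff, Set.mem_singleton_iff]; tauto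
  · rw [vY0, vY1, vY2] <;>
    · ext z; simp only [Set.mem_insert_iff, Set.mem_singleton_iff]; tauto

lemma bridgeB1 (y : Fin 3 → TMV) (hy : Ndg y) (k : ℕ) :
    triFaceNbr (tmVerts y ((0 : Fin 4) :: List.replicate k 1))
      (tmVerts y ((3 : Fin 4) :: List.replicate k 0)) := by
  set ε : ℝ := (2 : ℝ)⁻¹ ^ k with hεdef
  have hε : 0 < ε := by positivity
  have eX : ∀ j, tmVerts y ((0 : Fin 4) :: List.replicate k 1) j
      = beyChild y 0 1 + ε • (beyChild y 0 j - beyChild y 0 1) := by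
    intro j; rw [tmVerts_cons, corner1]
  have eY : ∀ j, tmVerts y ((3 : Fin 4) :: List.replicate k 0) j
      = beyChild y 3 0 + ε • (beyChild y 3 j - beyChild y 3 0) := by
    intro j; rw [tmVerts_cons, corner0]
  have vX0 : tmVerts y ((0 : Fin 4) :: List.replicate k 1) 0 = Phi y ![1/2 + ε/2, 1/2 - ε/2, 0] := by
    rw [eX 0]; simp [beyChild, tmMid, Phi]; try module
  have vX1 : tmVerts y ((0 : Fin 4) :: List.replicate k 1) 1 = Phi y ![1/2, 1/2, 0] := by
    rw [eX 1]; simp [beyChild, tmMid, Phi]; try module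
  have vX2 : tmVerts y ((0 : Fin 4) :: List.replicate k 1) 2 = Phi y ![1/2, 1/2 - ε/2, ε/2] := by
    rw [eX 2]; simp [beyChild, tmMid, Phi]; try module
  have vY0 : tmVerts y ((3 : Fin 4) :: List.replicate k 0) 0 = Phi y ![1/2, 1/2, 0] := by
    rw [eY 0]; simp [beyChild, tmMid, Phi]; try module
  have vY1 : tmVerts y ((3 : Fin 4) :: List.replicate k 0) 1 = Phi y ![1/2, 1/2 - ε/2, ε/2] := by
    rw [eY 1]; simp [beyChild, tmMid, Phi]; try module
  have vY2 : tmVerts y ((3 : Fin 4) :: List.replicate k 0) 2 = Phi y ![1/2 - ε/2, 1/2, ε/2] := by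
    rw [eY 2]; simp [beyChild, tmMid, Phi]; try module
  refine sep y hy ![1/2, 1/2, 0] ![1/2, 1/2 - ε/2, ε/2] ![1/2 + ε/2, 1/2 - ε/2, 0] ![1/2 - ε/2, 1/2, ε/2] ![-1, 1, 1]
    (by norm_num [Matrix.cons_val_two]; try ring) (by norm_num [Matrix.cons_val_two]; try ring) (by norm_num [Matrix.cons_val_two]; try ring) (by norm_num [Matrix.cons_val_two]; try ring)
    (by simp [dot3]; try ring) (by simp [dot3]; try ring)
    (by simp [dot3]; try nlinarith) (by simp [dot3]; try nlinarith)
    _ _ ?_ ?_ 1 2 (by decide) vX1 vX2 0 1 (by decide) vY0 vY1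
  · rw [vX0, vX1, vX2] <;>
    · ext z; simp only [Set.mem_insert_iff, Set.mem_singleton_iff]; tauto
  · rw [vY0, vY1, vY2] <;>
    · ext z; simp only [Set.mem_insert_iff, Set.mem_singleton_iff]; tauto

lemma bridgeB3 (y : Fin 3 → TMV) (hy : Ndg y) (k : ℕ) :
    triFaceNbr (tmVerts y ((2 : Fin 4) :: List.replicate k 1))
      (tmVerts y ((3 : Fin 4) :: List.replicate k 2)) := by
  set ε : ℝ := (2 : ℝ)⁻¹ ^ k with hεdef
  have hε : 0 < ε := by positivity
  have eX : ∀ j, tmVerts y ((2 : Fin 4) :: List.replicate k 1) j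
      = beyChild y 2 1 + ε • (beyChild y 2 j - beyChild y 2 1) := by
    intro j; rw [tmVerts_cons, corner1]
  have eY : ∀ j, tmVerts y ((3 : Fin 4) :: List.replicate k 2) j
      = beyChild y 3 2 + ε • (beyChild y 3 j - beyChild y 3 2) := by
    intro j; rw [tmVerts_cons, corner2]
  have vX0 : tmVerts y ((2 : Fin 4) :: List.replicate k 1) 0 = Phi y ![ε/2, 1/2 - ε/2, 1/2] := by
    rw [eX 0]; simp [beyChild, tmMid, Phi]; try module
  have vX1 : tmVerts y ((2 : Fin 4) :: List.replicate k 1) 1 = Phi y ![0, 1/2, 1/2] := by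
    rw [eX 1]; simp [beyChild, tmMid, Phi]; try module
  have vX2 : tmVerts y ((2 : Fin 4) :: List.replicate k 1) 2 = Phi y ![0, 1/2 - ε/2, 1/2 + ε/2] := by
    rw [eX 2]; simp [beyChild, tmMid, Phi]; try module
  have vY0 : tmVerts y ((3 : Fin 4) :: List.replicate k 2) 0 = Phi y ![ε/2, 1/2, 1/2 - ε/2] := by
    rw [eY 0]; simp [beyChild, tmMid, Phi]; try module
  have vY1 : tmVerts y ((3 : Fin 4) :: List.replicate k 2) 1 = Phi y ![ε/2, 1/2 - ε/2, 1/2] := by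
    rw [eY 1]; simp [beyChild, tmMid, Phi]; try module
  have vY2 : tmVerts y ((3 : Fin 4) :: List.replicate k 2) 2 = Phi y ![0, 1/2, 1/2] := by
    rw [eY 2]; simp [beyChild, tmMid, Phi]; try module
  refine sep y hy ![0, 1/2, 1/2] ![ε/2, 1/2 - ε/2, 1/2] ![0, 1/2 - ε/2, 1/2 + ε/2] ![ε/2, 1/2, 1/2 - ε/2] ![1, 1, -1]
    (by norm_num [Matrix.cons_val_two]; try ring) (by norm_num [Matrix.cons_val_two]; try ring) (by norm_num [Matrix.cons_val_two]; try ring) (by norm_num [Matrix.cons_val_two]; try ring)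
    (by simp [dot3]; try ring) (by simp [dot3]; try ring)
    (by simp [dot3]; try nlinarith) (by simp [dot3]; try nlinarith)
    _ _ ?_ ?_ 1 0 (by decide) vX1 vX0 2 1 (by decide) vY2 vY1
  · rw [vX0, vX1, vX2] <;>
    · ext z; simp only [Set.mem_insert_iff, Set.mem_singleton_iff]; tauto
  · rw [vY0, vY1, vY2] <;>
    · ext z; simp only [Set.mem_insert_iff, Set.mem_singleton_iff]; tauto

lemma bridgeB4 (y : Fin 3 → TMV) (hy : Ndg y) (k : ℕ) :
    triFaceNbr (tmVerts y ((1 : Fin 4) :: List.replicate k 2))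
      (tmVerts y ((3 : Fin 4) :: List.replicate k 2)) := by
  set ε : ℝ := (2 : ℝ)⁻¹ ^ k with hεdef
  have hε : 0 < ε := by positivity
  have eX : ∀ j, tmVerts y ((1 : Fin 4) :: List.replicate k 2) j
      = beyChild y 1 2 + ε • (beyChild y 1 j - beyChild y 1 2) := by
    intro j; rw [tmVerts_cons, corner2]
  have eY : ∀ j, tmVerts y ((3 : Fin 4) :: List.replicate k 2) j
      = beyChild y 3 2 + ε • (beyChild y 3 j - beyChild y 3 2) := by
    intro j; rw [tmVerts_cons, corner2]
  have vX0 : tmVerts y ((1 : Fin 4) :: List.replicate k 2) 0 = Phi y ![ε/2, 1/2, 1/2 - ε/2] := by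
    rw [eX 0]; simp [beyChild, tmMid, Phi]; try module
  have vX1 : tmVerts y ((1 : Fin 4) :: List.replicate k 2) 1 = Phi y ![0, 1/2 + ε/2, 1/2 - ε/2] := by
    rw [eX 1]; simp [beyChild, tmMid, Phi]; try module
  have vX2 : tmVerts y ((1 : Fin 4) :: List.replicate k 2) 2 = Phi y ![0, 1/2, 1/2] := by
    rw [eX 2]; simp [beyChild, tmMid, Phi]; try module
  have vY0 : tmVerts y ((3 : Fin 4) :: List.replicate k 2) 0 = Phi y ![ε/2, 1/2, 1/2 - ε/2] := by
    rw [eY 0]; simp [beyChild, tmMid, Phi]; try module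
  have vY1 : tmVerts y ((3 : Fin 4) :: List.replicate k 2) 1 = Phi y ![ε/2, 1/2 - ε/2, 1/2] := by
    rw [eY 1]; simp [beyChild, tmMid, Phi]; try module
  have vY2 : tmVerts y ((3 : Fin 4) :: List.replicate k 2) 2 = Phi y ![0, 1/2, 1/2] := by
    rw [eY 2]; simp [beyChild, tmMid, Phi]; try module
  refine sep y hy ![0, 1/2, 1/2] ![ε/2, 1/2, 1/2 - ε/2] ![0, 1/2 + ε/2, 1/2 - ε/2] ![ε/2, 1/2 - ε/2, 1/2] ![1, -1, 1]
    (by norm_num [Matrix.cons_val_two]; try ring) (by norm_num [Matrix.cons_val_two]; try ring) (by norm_num [Matrix.cons_val_two]; try ring) (by norm_num [Matrix.cons_val_two]; try ring)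
    (by simp [dot3]; try ring) (by simp [dot3]; try ring)
    (by simp [dot3]; try nlinarith) (by simp [dot3]; try nlinarith)
    _ _ ?_ ?_ 2 0 (by decide) vX2 vX0 2 0 (by decide) vY2 vY0
  · rw [vX0, vX1, vX2] <;>
    · ext z; simp only [Set.mem_insert_iff, Set.mem_singleton_iff]; tauto
  · rw [vY0, vY1, vY2] <;>
    · ext z; simp only [Set.mem_insert_iff, Set.mem_singleton_iff]; tauto

lemma ndg_bey {y : Fin 3 → TMV} (hy : Ndg y) (i : Fin 4) : Ndg (beyChild y i) := by
  fin_cases i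
  · intro c hs hc
    have h := hy ![c 0 + c 1 / 2 + c 2 / 2, c 1 / 2, c 2 / 2]
      (by simp; linarith)
      (by rw [← hc]; simp [beyChild, tmMid, Phi]; try module)
    have h0 := congrFun h 0; have h1 := congrFun h 1; have h2 := congrFun h 2
    simp at h0 h1 h2
    funext j; fin_cases j <;> simp <;> linarith
  · intro c hs hc
    have h := hy ![c 0 / 2, c 0 / 2 + c 1 + c 2 / 2, c 2 / 2]
      (by simp; linarith)
      (by rw [← hc]; simp [beyChild, tmMid, Phi]; try module)
    have h0 := congrFun h 0; have h1 := congrFun h 1; have h2 := congrFun h 2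
    simp at h0 h1 h2
    funext j; fin_cases j <;> simp <;> linarith
  · intro c hs hc
    have h := hy ![c 0 / 2, c 1 / 2, c 0 / 2 + c 1 / 2 + c 2]
      (by simp; linarith)
      (by rw [← hc]; simp [beyChild, tmMid, Phi]; try module)
    have h0 := congrFun h 0; have h1 := congrFun h 1; have h2 := congrFun h 2
    simp at h0 h1 h2
    funext j; fin_cases j <;> simp <;> linarith
  · intro c hs hc
    have h := hy ![c 0 / 2 + c 1 / 2, c 0 / 2 + c 2 / 2, c 1 / 2 + c 2 / 2]
      (by simp; linarith)
      (by rw [← hc]; simp [beyChild, tmMid, Phi]; try module)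
    have h0 := congrFun h 0; have h1 := congrFun h 1; have h2 := congrFun h 2
    simp at h0 h1 h2
    funext j; fin_cases j <;> simp <;> linarith

/-- the step relation on paths -/
def tmRel (x0 : Fin 3 → TMV) (S : Set (List (Fin 4))) (a b : List (Fin 4)) : Prop :=
  a ∈ S ∧ b ∈ S ∧ triFaceNbr (tmVerts x0 a) (tmVerts x0 b)

lemma tmRel_symm (x0 : Fin 3 → TMV) (S : Set (List (Fin 4))) : Symmetric (tmRel x0 S) :=
  fun _ _ ⟨ha, hb, hn⟩ => ⟨hb, ha, triFaceNbr_symm hn⟩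

lemma rtg_symm {x0 : Fin 3 → TMV} {S : Set (List (Fin 4))} {a b : List (Fin 4)}
    (h : Relation.ReflTransGen (tmRel x0 S) a b) :
    Relation.ReflTransGen (tmRel x0 S) b a :=
  haveI : Std.Symm (tmRel x0 S) := ⟨fun _ _ hab => tmRel_symm x0 S hab⟩; Std.Symm.symm _ _ h

lemma lift_cons {y : Fin 3 → TMV} (i : Fin 4) {S T : Set (List (Fin 4))}
    (hT : ∀ r ∈ S, (i :: r) ∈ T) {a b : List (Fin 4)}
    (h : Relation.ReflTransGen (tmRel (beyChild y i) S) a b) :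
    Relation.ReflTransGen (tmRel y T) (i :: a) (i :: b) :=
  Relation.ReflTransGen.lift (p := tmRel y T) (fun l => i :: l)
    (fun a b hpq => show tmRel y T (i :: a) (i :: b) from ⟨hT _ hpq.1, hT _ hpq.2.1, hpq.2.2⟩) _ _ h

lemma connFull (ℓ : ℕ) : ∀ (y : Fin 3 → TMV), Ndg y → ∀ a b : List (Fin 4),
    a.length = ℓ → b.length = ℓ →
    Relation.ReflTransGen (tmRel y {r | r.length = ℓ}) a b := by
  induction ℓ with
  | zero =>
    intro y hy a b ha hb
    rw [List.length_eq_zero_iff] at ha hb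
    subst ha; subst hb; exact Relation.ReflTransGen.refl
  | succ ℓ ih =>
    intro y hy a b ha hb
    have within : ∀ (i : Fin 4) (r r' : List (Fin 4)), r.length = ℓ → r'.length = ℓ →
        Relation.ReflTransGen (tmRel y {r | r.length = ℓ + 1}) (i :: r) (i :: r') := by
      intro i r r' hr hr'
      exact lift_cons i (fun s hs => by simp [Set.mem_setOf_eq] at hs ⊢; exact hs)
        (ih (beyChild y i) (ndg_bey hy i) r r' hr hr')
    have hub : ∀ (p : List (Fin 4)), p.length = ℓ + 1 →
        Relation.ReflTransGen (tmRel y {r | r.length = ℓ + 1}) p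
          ((3 : Fin 4) :: List.replicate ℓ 0) := by
      intro p hp
      obtain ⟨i, q, rfl⟩ : ∃ i q, p = i :: q := by
        cases p with
        | nil => simp at hp
        | cons i q => exact ⟨i, q, rfl⟩
      have hq : q.length = ℓ := by simpa using hp
      fin_cases i
      · exact (within 0 q (List.replicate ℓ 1) hq (by simp)).trans
          (Relation.ReflTransGen.single ⟨by simp, by simp, bridgeB1 y hy ℓ⟩)
      · exact (within 1 q (List.replicate ℓ 0) hq (by simp)).trans
          (Relation.ReflTransGen.single ⟨by simp, by simp, bridgeB2 y hy ℓ⟩)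
      · exact ((within 2 q (List.replicate ℓ 1) hq (by simp)).trans
          (Relation.ReflTransGen.single ⟨by simp, by simp, bridgeB3 y hy ℓ⟩)).trans
          (within 3 (List.replicate ℓ 2) (List.replicate ℓ 0) (by simp) (by simp))
      · exact within 3 q (List.replicate ℓ 0) hq (by simp)
    exact (hub a ha).trans (rtg_symm (hub b hb))

lemma tmIndexP_lt (τ : Fin 2) (p : List (Fin 4)) : tmIndex τ p < 4 ^ p.length := by
  induction p generalizing τ with
  | nil => simp [tmIndex]
  | cons i q ih =>
    have hr : (tmChildRank τ i : ℕ) ≤ 3 := Fin.is_le _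
    have ht := ih (if i = 3 then 1 - τ else τ)
    have hA : 0 < 4 ^ q.length := Nat.pow_pos (by norm_num)
    have : tmIndex τ (i :: q) = (tmChildRank τ i : ℕ) * 4 ^ q.length
        + tmIndex (if i = 3 then 1 - τ else τ) q := rfl
    rw [this, List.length_cons, pow_succ]
    have h1 : (tmChildRank τ i : ℕ) * 4 ^ q.length ≤ 3 * 4 ^ q.length :=
      Nat.mul_le_mul_right _ hr
    omega

lemma rankP_zero {τ : Fin 2} {i : Fin 4} (h : (tmChildRank τ i : ℕ) = 0) : i = 0 := by
  fin_cases τ <;> fin_cases i <;> simp_all [tmChildRank] <;> omega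

lemma rankP_three {τ : Fin 2} {i : Fin 4} (h : (tmChildRank τ i : ℕ) = 3) : i = 2 := by
  fin_cases τ <;> fin_cases i <;> simp_all [tmChildRank] <;> omega

lemma rankP_inj {τ : Fin 2} {i j : Fin 4} (h : (tmChildRank τ i : ℕ) = (tmChildRank τ j : ℕ)) :
    i = j := by
  fin_cases τ <;> fin_cases i <;> fin_cases j <;> simp_all [tmChildRank] <;> omega

lemma tmIndexP_zero {τ : Fin 2} {p : List (Fin 4)} {n : ℕ} (hl : p.length = n)
    (h : tmIndex τ p = 0) : p = List.replicate n 0 := by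
  induction p generalizing τ n with
  | nil => simp at hl; subst hl; rfl
  | cons i q ih =>
    have hd : tmIndex τ (i :: q) = (tmChildRank τ i : ℕ) * 4 ^ q.length
        + tmIndex (if i = 3 then 1 - τ else τ) q := rfl
    rw [hd] at h
    have hA : 0 < 4 ^ q.length := Nat.pow_pos (by norm_num)
    have hr0 : (tmChildRank τ i : ℕ) = 0 := by
      by_contra hne
      have : 1 ≤ (tmChildRank τ i : ℕ) := Nat.one_le_iff_ne_zero.2 hne
      have := Nat.mul_le_mul_right (4 ^ q.length) this
      omega
    have hi : i = 0 := rankP_zero hr0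
    subst hi
    obtain ⟨m, rfl⟩ : ∃ m, n = m + 1 := ⟨q.length, by simpa using hl.symm⟩
    have hq : q.length = m := by simpa using hl
    rw [List.replicate_succ]
    have : q = List.replicate m 0 := ih (τ := if (0 : Fin 4) = 3 then 1 - τ else τ) hq (by omega)
    rw [this]
lemma tmIndexP_last {τ : Fin 2} {p : List (Fin 4)} {n : ℕ} (hl : p.length = n)
    (h : tmIndex τ p = 4 ^ n - 1) : p = List.replicate n 2 := by
  induction p generalizing τ n with
  | nil => simp at hl; subst hl; rfl
  | cons i q ih =>
    obtain ⟨m, rfl⟩ : ∃ m, n = m + 1 := ⟨q.length, by simpa using hl.symm⟩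
    have hq : q.length = m := by simpa using hl
    have hd : tmIndex τ (i :: q) = (tmChildRank τ i : ℕ) * 4 ^ q.length
        + tmIndex (if i = 3 then 1 - τ else τ) q := rfl
    rw [hd, hq] at h
    have hA : 0 < 4 ^ m := Nat.pow_pos (by norm_num)
    have hr : (tmChildRank τ i : ℕ) ≤ 3 := Fin.is_le _
    have ht : tmIndex (if i = 3 then 1 - τ else τ) q < 4 ^ m := by
      have := tmIndexP_lt (if i = 3 then 1 - τ else τ) q
      rwa [hq] at this
    have h4 : (4 : ℕ) ^ (m + 1) = 4 * 4 ^ m := pow_succ' 4 m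
    rw [h4] at h
    have hr3 : (tmChildRank τ i : ℕ) = 3 := by
      set r := (tmChildRank τ i : ℕ) with hrdef
      interval_cases r <;> omega
    have hi : i = 2 := rankP_three hr3
    subst hi
    have hrest : tmIndex (if (2 : Fin 4) = 3 then 1 - τ else τ) q = 4 ^ m - 1 := by
      rw [hr3] at h; omega
    rw [List.replicate_succ]
    have : q = List.replicate m 2 := ih hq hrest
    rw [this]

lemma tmIndex_digit_first {τ : Fin 2} {i : Fin 4} {q : List (Fin 4)} {R : ℕ} (hR : R ≤ 3)
    (h : tmIndex τ (i :: q) = R * 4 ^ q.length) :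
    (tmChildRank τ i : ℕ) = R ∧ tmIndex (if i = 3 then 1 - τ else τ) q = 0 := by
  have hd : tmIndex τ (i :: q) = (tmChildRank τ i : ℕ) * 4 ^ q.length
      + tmIndex (if i = 3 then 1 - τ else τ) q := rfl
  rw [hd] at h
  have hA : 0 < 4 ^ q.length := Nat.pow_pos (by norm_num)
  have hr : (tmChildRank τ i : ℕ) ≤ 3 := Fin.is_le _
  have ht : tmIndex (if i = 3 then 1 - τ else τ) q < 4 ^ q.length :=
    tmIndexP_lt _ q
  set r := (tmChildRank τ i : ℕ) with hrdef
  constructor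
  · interval_cases r <;> interval_cases R <;> omega
  · interval_cases r <;> interval_cases R <;> omega

lemma tmIndex_digit_pred {τ : Fin 2} {i : Fin 4} {q : List (Fin 4)} {R : ℕ}
    (hR1 : 1 ≤ R) (hR : R ≤ 4)
    (h : tmIndex τ (i :: q) + 1 = R * 4 ^ q.length) :
    (tmChildRank τ i : ℕ) = R - 1 ∧
      tmIndex (if i = 3 then 1 - τ else τ) q = 4 ^ q.length - 1 := by
  have hd : tmIndex τ (i :: q) = (tmChildRank τ i : ℕ) * 4 ^ q.length
      + tmIndex (if i = 3 then 1 - τ else τ) q := rfl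
  rw [hd] at h
  have hA : 0 < 4 ^ q.length := Nat.pow_pos (by norm_num)
  have hr : (tmChildRank τ i : ℕ) ≤ 3 := Fin.is_le _
  have ht : tmIndex (if i = 3 then 1 - τ else τ) q < 4 ^ q.length :=
    tmIndexP_lt _ q
  set r := (tmChildRank τ i : ℕ) with hrdef
  constructor
  · interval_cases r <;> interval_cases R <;> omega
  · interval_cases r <;> interval_cases R <;> omega

/-- the set of level-`(k+1)` paths whose level-1 child has TM rank in `[u, w]` -/
def Blk (τ : Fin 2) (u w k : ℕ) : Set (List (Fin 4)) :=
  {p : List (Fin 4) | p.length = k + 1 ∧ ∃ i : Fin 4, p.head? = some i ∧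
      u ≤ (tmChildRank τ i : ℕ) ∧ (tmChildRank τ i : ℕ) ≤ w}

lemma mem_Blk {τ : Fin 2} {u w k : ℕ} {p : List (Fin 4)} :
    p ∈ Blk τ u w k ↔ ∃ (i : Fin 4) (q : List (Fin 4)), q.length = k ∧ p = i :: q ∧
      u ≤ (tmChildRank τ i : ℕ) ∧ (tmChildRank τ i : ℕ) ≤ w := by
  constructor
  · rintro ⟨hlen, i, hhead, h1, h2⟩
    cases p with
    | nil => simp at hlen
    | cons j q =>
      have : j = i := by simpa using hhead
      subst this
      exact ⟨j, q, by simpa using hlen, rfl, h1, h2⟩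
  · rintro ⟨i, q, hq, rfl, h1, h2⟩
    exact ⟨by simp [hq], i, rfl, h1, h2⟩

/-- connectivity of the descendants of a single child, relative to an ambient set -/
lemma connChild {x0 : Fin 3 → TMV} (hx : Ndg x0) (i : Fin 4) {k : ℕ}
    {T : Set (List (Fin 4))} (hT : ∀ r : List (Fin 4), r.length = k → (i :: r) ∈ T)
    {a b : List (Fin 4)} (ha : a.length = k) (hb : b.length = k) :
    Relation.ReflTransGen (tmRel x0 T) (i :: a) (i :: b) :=
  lift_cons i (fun s hs => hT s hs)
    (connFull k (beyChild x0 i) (ndg_bey hx i) a b ha hb)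

lemma blockConn {x0 : Fin 3 → TMV} (hx : Ndg x0) (τ : Fin 2) (u w k : ℕ)
    (hc1 : u ≤ (tmChildRank τ 3 : ℕ)) (hc2 : (tmChildRank τ 3 : ℕ) ≤ w) :
    triFaceConnected x0 (Blk τ u w k) := by
  have hT3 : ∀ r : List (Fin 4), r.length = k → ((3 : Fin 4) :: r) ∈ Blk τ u w k :=
    fun r hr => mem_Blk.2 ⟨3, r, hr, rfl, hc1, hc2⟩
  have toHub : ∀ p ∈ Blk τ u w k,
      Relation.ReflTransGen (tmRel x0 (Blk τ u w k)) p
        ((3 : Fin 4) :: List.replicate k 0) := by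
    intro p hp
    obtain ⟨i, q, hq, rfl, h1, h2⟩ := mem_Blk.1 hp
    have hTi : ∀ r : List (Fin 4), r.length = k → (i :: r) ∈ Blk τ u w k :=
      fun r hr => mem_Blk.2 ⟨i, r, hr, rfl, h1, h2⟩
    fin_cases i
    · exact (connChild hx 0 hTi hq (by simp)).trans
        (Relation.ReflTransGen.single
          ⟨hTi _ (by simp), hT3 _ (by simp), bridgeB1 x0 hx k⟩)
    · exact (connChild hx 1 hTi hq (by simp)).trans
        (Relation.ReflTransGen.single
          ⟨hTi _ (by simp), hT3 _ (by simp), bridgeB2 x0 hx k⟩)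
    · exact ((connChild hx 2 hTi hq (by simp)).trans
        (Relation.ReflTransGen.single
          ⟨hTi _ (by simp), hT3 _ (by simp), bridgeB3 x0 hx k⟩)).trans
        (connChild hx 3 hT3 (by simp) (by simp))
    · exact connChild hx 3 hT3 hq (by simp)
  intro p hp q hq
  exact (toHub p hp).trans (rtg_symm (toHub q hq))

lemma blockConnSingle {x0 : Fin 3 → TMV} (hx : Ndg x0) (τ : Fin 2) (u k : ℕ) :
    triFaceConnected x0 (Blk τ u u k) := by
  intro p hp q hq
  obtain ⟨i, a, ha, rfl, hi1, hi2⟩ := mem_Blk.1 hp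
  obtain ⟨j, b, hb, rfl, hj1, hj2⟩ := mem_Blk.1 hq
  have hij : i = j := rankP_inj ((le_antisymm hi2 hi1).trans (le_antisymm hj2 hj1).symm)
  subst hij
  exact connChild hx i (fun r hr => mem_Blk.2 ⟨i, r, hr, rfl, hi1, hi2⟩) ha hb

/-- descendants of a fixed child -/
def Desc (i : Fin 4) (k : ℕ) : Set (List (Fin 4)) :=
  {p : List (Fin 4) | ∃ q : List (Fin 4), q.length = k ∧ p = i :: q}

lemma descConn {x0 : Fin 3 → TMV} (hx : Ndg x0) (i : Fin 4) (k : ℕ) :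
    triFaceConnected x0 (Desc i k) := by
  rintro p ⟨a, ha, rfl⟩ q ⟨b, hb, rfl⟩
  exact connChild hx i (fun r hr => by exact ⟨r, hr, rfl⟩) ha hb

lemma badConnAux {x0 : Fin 3 → TMV} (hx : Ndg x0) (k : ℕ) (v : Fin 4)
    (hbr : triFaceNbr (tmVerts x0 ((1 : Fin 4) :: List.replicate k v))
      (tmVerts x0 ((3 : Fin 4) :: List.replicate k v))) :
    triFaceConnected x0 (Desc 1 k ∪ {(3 : Fin 4) :: List.replicate k v}) := by
  set E : List (Fin 4) := (3 : Fin 4) :: List.replicate k v with hE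
  have hTi : ∀ r : List (Fin 4), r.length = k →
      ((1 : Fin 4) :: r) ∈ Desc 1 k ∪ {E} := fun r hr => Or.inl ⟨r, hr, rfl⟩
  have toE : ∀ r : List (Fin 4), r.length = k →
      Relation.ReflTransGen (tmRel x0 (Desc 1 k ∪ {E})) ((1 : Fin 4) :: r) E := by
    intro r hr
    exact (connChild hx 1 hTi hr (by simp)).trans
      (Relation.ReflTransGen.single ⟨hTi _ (by simp), Or.inr rfl, hbr⟩)
  rintro p hp q hq
  rcases hp with ⟨a, ha, rfl⟩ | hp
  · rcases hq with ⟨b, hb, rfl⟩ | hq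
    · exact (toE a ha).trans (rtg_symm (toE b hb))
    · rw [Set.mem_singleton_iff] at hq; subst hq; exact toE a ha
  · rw [Set.mem_singleton_iff] at hp; subst hp
    rcases hq with ⟨b, hb, rfl⟩ | hq
    · exact rtg_symm (toE b hb)
    · rw [Set.mem_singleton_iff] at hq; subst hq; exact Relation.ReflTransGen.refl

lemma connSingleton (x0 : Fin 3 → TMV) (e : List (Fin 4)) :
    triFaceConnected x0 ({e} : Set (List (Fin 4))) := by
  intro p hp q hq
  rw [Set.mem_singleton_iff] at hp hq
  subst hp; subst hq
  exact Relation.ReflTransGen.refl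

lemma compBound2 (x0 : Fin 3 → TMV) (S f0 f1 : Set (List (Fin 4)))
    (hu : S = f0 ∪ f1) (h0 : triFaceConnected x0 f0) (h1 : triFaceConnected x0 f1) :
    triCompBound x0 S 2 := by
  refine ⟨![f0, f1], ?_, ?_⟩
  · rw [hu]; ext p
    simp only [Set.mem_iUnion, Fin.exists_fin_two, Matrix.cons_val_zero,
      Matrix.cons_val_one, Matrix.head_cons, Set.mem_union]
  · intro i; fin_cases i <;> simpa

lemma rank0_two {i : Fin 4} (h : (tmChildRank 0 i : ℕ) = 2) : i = 3 := by
  fin_cases i <;> simp_all [tmChildRank] <;> omega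

lemma rank1_one {i : Fin 4} (h : (tmChildRank 1 i : ℕ) = 1) : i = 3 := by
  fin_cases i <;> simp_all [tmChildRank] <;> omega

lemma blk0_eq (k : ℕ) : Blk 0 0 1 k = Desc 0 k ∪ Desc 1 k := by
  ext p
  rw [Set.mem_union, mem_Blk]
  constructor
  · rintro ⟨i, q, hq, rfl, h1, h2⟩
    fin_cases i
    · exact Or.inl ⟨q, hq, rfl⟩
    · exact Or.inr ⟨q, hq, rfl⟩
    · exact absurd h2 (by decide)
    · exact absurd h2 (by decide)
  · rintro (⟨q, hq, rfl⟩ | ⟨q, hq, rfl⟩)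
    · exact ⟨0, q, hq, rfl, by decide, by decide⟩
    · exact ⟨1, q, hq, rfl, by decide, by decide⟩

lemma blk1_eq (k : ℕ) : Blk 1 2 3 k = Desc 1 k ∪ Desc 2 k := by
  ext p
  rw [Set.mem_union, mem_Blk]
  constructor
  · rintro ⟨i, q, hq, rfl, h1, h2⟩
    fin_cases i
    · exact absurd h1 (by decide)
    · exact Or.inl ⟨q, hq, rfl⟩
    · exact Or.inr ⟨q, hq, rfl⟩
    · exact absurd h1 (by decide)
  · rintro (⟨q, hq, rfl⟩ | ⟨q, hq, rfl⟩)
    · exact ⟨1, q, hq, rfl, by decide, by decide⟩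
    · exact ⟨2, q, hq, rfl, by decide, by decide⟩

/-- Let a contiguous TM segment consist of all level-`L` descendants of the consecutive
(in the TM child order of the type-`τ` root) level-1 children with ranks `u, …, w`,
together with exactly one additional level-`L` subtriangle `e` that immediately precedes
or immediately follows this union in the TM order.  Then the segment has at most two
face-connected components. -/
theorem tm_full_children_plus_one_at_most_two_components (x0 : Fin 3 → TMV)
    (hx0 : AffineIndependent ℝ x0) (L : ℕ) (hL : 1 ≤ L) (τ : Fin 2)
    (u w : ℕ) (huw : u ≤ w) (hw : w ≤ 3)
    (e : List (Fin 4)) (he : e.length = L)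
    (hidx : tmIndex τ e + 1 = u * 4 ^ (L - 1) ∨ tmIndex τ e = (w + 1) * 4 ^ (L - 1)) :
    triCompBound x0
      ({p : List (Fin 4) | p.length = L ∧ ∃ i : Fin 4, p.head? = some i ∧
          u ≤ (tmChildRank τ i : ℕ) ∧ (tmChildRank τ i : ℕ) ≤ w} ∪ {e}) 2 := by
  obtain ⟨k, rfl⟩ : ∃ k, L = k + 1 := ⟨L - 1, by omega⟩
  simp only [Nat.add_sub_cancel] at hidx
  have hx : Ndg x0 := ndg_of_affineIndependent hx0
  show triCompBound x0 (Blk τ u w k ∪ {e}) 2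
  by_cases hg : u ≤ (tmChildRank τ 3 : ℕ) ∧ (tmChildRank τ 3 : ℕ) ≤ w
  · exact compBound2 x0 _ _ _ rfl (blockConn hx τ u w k hg.1 hg.2) (connSingleton x0 e)
  by_cases hs : u = w
  · subst hs
    exact compBound2 x0 _ _ _ rfl (blockConnSingle hx τ u k) (connSingleton x0 e)
  have huw' : u < w := lt_of_le_of_ne huw hs
  have hτ : τ = 0 ∨ τ = 1 := (by decide : ∀ t : Fin 2, t = 0 ∨ t = 1) τ
  rcases hτ with rfl | rfl
  · -- τ = 0 : the block is {T0, T1}, e is the first descendant of T3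
    rw [show ((tmChildRank (0 : Fin 2) (3 : Fin 4) : Fin 4) : ℕ) = 2 from by decide] at hg
    have hu0 : u = 0 := by omega
    have hw1 : w = 1 := by omega
    subst hu0; subst hw1
    rcases hidx with h1 | h2
    · simp at h1
    · obtain ⟨i, q, rfl⟩ : ∃ i q, e = i :: q := by
        cases e with
        | nil => simp at he
        | cons i q => exact ⟨i, q, rfl⟩
      have hq : q.length = k := by simpa using he
      rw [← hq] at h2
      have hdig := tmIndex_digit_first (by norm_num : (1 + 1 : ℕ) ≤ 3) h2
      have hi : i = 3 := rank0_two (by simpa using hdig.1)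
      subst hi
      have hq0 : q = List.replicate k 0 := tmIndexP_zero hq (by simpa using hdig.2)
      subst hq0
      exact compBound2 x0 _ (Desc 1 k ∪ {(3 : Fin 4) :: List.replicate k 0}) (Desc 0 k)
        (by rw [blk0_eq]; ext p; simp only [Set.mem_union, Set.mem_singleton_iff]; tauto)
        (badConnAux hx k 0 (bridgeB2 x0 hx k)) (descConn hx 0 k)
  · -- τ = 1 : the block is {T1, T2}, e is the last descendant of T3
    rw [show ((tmChildRank (1 : Fin 2) (3 : Fin 4) : Fin 4) : ℕ) = 1 from by decide] at hg
    have hu2 : u = 2 := by omega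
    have hw3 : w = 3 := by omega
    subst hu2; subst hw3
    rcases hidx with h1 | h2
    · obtain ⟨i, q, rfl⟩ : ∃ i q, e = i :: q := by
        cases e with
        | nil => simp at he
        | cons i q => exact ⟨i, q, rfl⟩
      have hq : q.length = k := by simpa using he
      rw [← hq] at h1
      have hdig := tmIndex_digit_pred (by norm_num) (by norm_num) h1
      have hi : i = 3 := rank1_one (by simpa using hdig.1)
      subst hi
      have hq2 : q = List.replicate k 2 := tmIndexP_last hq (by simpa [hq] using hdig.2)
      subst hq2
      exact compBound2 x0 _ (Desc 1 k ∪ {(3 : Fin 4) :: List.replicate k 2}) (Desc 2 k)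
        (by rw [blk1_eq]; ext p; simp only [Set.mem_union, Set.mem_singleton_iff]; tauto)
        (badConnAux hx k 2 (bridgeB4 x0 hx k)) (descConn hx 2 k)
    · exfalso
      have hlt := tmIndexP_lt 1 e
      rw [he] at hlt
      have : (4 : ℕ) ^ (k + 1) = 4 * 4 ^ k := pow_succ' 4 k
      omega
end
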